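/- arXiv:2203.08260 — 7 statements merged into one kernel-verified Lean document; each statement's English description precedes it below -/
import Mathlib

section
/- The function B(i) = E[Θ(1-(1-pi)^{Θ-1})] is concave on [0,1], and B(i) = B'(0)·i for all i∈[0,1] if and only if Θ∈{0,1,2} almost surely; otherwise B is strictly concave. -/
open MeasureTheory Set

private lemma bern_strict {x : ℝ} (hx0 : 0 ≤ x) (hx1 : x < 1) :
    ∀ k : ℕ, 2 ≤ k → 1 - x ^ k < (k : ℝ) * (1 - x) := by
  intro k hk
  induction k with
  | zero => omega
  | succ n ih =>
    rcases Nat.lt_or_ge n 2 with h | h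
    · interval_cases n
      · omega
      · push_cast; nlinarith [sq_nonneg (1 - x)]
    · have h1 : x ^ n ≤ 1 := pow_le_one₀ hx0 hx1.le
      have h0 : (0:ℝ) ≤ x ^ n := pow_nonneg hx0 n
      have := ih h
      have hx : x ^ n * (1 - x) ≤ 1 * (1 - x) :=
        mul_le_mul_of_nonneg_right h1 (by linarith)
      push_cast
      rw [pow_succ]
      nlinarith

private lemma pt_concave {u v a b : ℝ} (hu : u ∈ Icc (0:ℝ) 1) (hv : v ∈ Icc (0:ℝ) 1)
    (ha : 0 ≤ a) (hb : 0 ≤ b) (hab : a + b = 1) (n : ℕ) :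
    a * ((n:ℝ) * (1 - u ^ (n-1))) + b * ((n:ℝ) * (1 - v ^ (n-1))) ≤
      (n:ℝ) * (1 - (a*u + b*v) ^ (n-1)) := by
  have hc := (convexOn_pow (n-1)).2 (mem_Ici.2 hu.1) (mem_Ici.2 hv.1) ha hb hab
  simp only [smul_eq_mul] at hc
  have hn : (0:ℝ) ≤ (n:ℝ) := Nat.cast_nonneg _
  nlinarith [mul_le_mul_of_nonneg_left hc hn]

private lemma pt_strict {u v a b : ℝ} (hu : u ∈ Icc (0:ℝ) 1) (hv : v ∈ Icc (0:ℝ) 1)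
    (huv : u ≠ v) (ha : 0 < a) (hb : 0 < b) (hab : a + b = 1) {n : ℕ} (hn : 3 ≤ n) :
    a * ((n:ℝ) * (1 - u ^ (n-1))) + b * ((n:ℝ) * (1 - v ^ (n-1))) <
      (n:ℝ) * (1 - (a*u + b*v) ^ (n-1)) := by
  have h2 : 2 ≤ n - 1 := by omega
  have hc := (strictConvexOn_pow h2).2 (mem_Ici.2 hu.1) (mem_Ici.2 hv.1) huv ha hb hab
  simp only [smul_eq_mul] at hc
  have hn0 : (0:ℝ) < (n:ℝ) := by exact_mod_cast (by omega : 0 < n)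
  nlinarith [mul_lt_mul_of_pos_left hc hn0]

private lemma term_integrable {Ω : Type*} [MeasurableSpace Ω] {P : Measure Ω} {Θ : Ω → ℕ}
    (hΘ : Measurable Θ) (hint : Integrable (fun ω => ((Θ ω : ℝ)) ^ 2) P)
    {u : ℝ} (hu : u ∈ Icc (0:ℝ) 1) :
    Integrable (fun ω => (Θ ω : ℝ) * (1 - u ^ (Θ ω - 1))) P := by
  have hm : Measurable fun ω => (Θ ω : ℝ) * (1 - u ^ (Θ ω - 1)) :=
    (measurable_from_top (f := fun n : ℕ => (n:ℝ) * (1 - u ^ (n-1)))).comp hΘ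
  refine hint.mono hm.aestronglyMeasurable (ae_of_all _ fun ω => ?_)
  have h1 : (0:ℝ) ≤ u ^ (Θ ω - 1) := pow_nonneg hu.1 _
  have h2 : u ^ (Θ ω - 1) ≤ 1 := pow_le_one₀ hu.1 hu.2
  have hn : (0:ℝ) ≤ (Θ ω : ℝ) := Nat.cast_nonneg _
  have hn2 : (Θ ω : ℝ) ≤ (Θ ω : ℝ) ^ 2 := by
    exact_mod_cast Nat.le_self_pow two_ne_zero (Θ ω)
  simp only [Real.norm_eq_abs]
  rw [abs_of_nonneg (by nlinarith), abs_of_nonneg (by positivity)]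
  nlinarith

private lemma pt_le {p : ℝ} (hp2 : -2 ≤ -p) (n : ℕ) :
    (n:ℝ) * (1 - (1-p) ^ (n-1)) ≤ p * ((n:ℝ) * ((n:ℝ) - 1)) := by
  rcases n with _ | _ | m
  · simp
  · simp
  · have hb2 : 1 - ((m:ℝ)+1) * p ≤ (1-p) ^ (m+1) := by
      have h := one_add_mul_le_pow hp2 (m+1)
      have e : (1:ℝ) + -p = 1 - p := by ring
      rw [e] at h
      push_cast at h
      linarith
    have hk : (m + 1 + 1 - 1 : ℕ) = m + 1 := rfl
    rw [hk]
    have hn : (0:ℝ) ≤ (m:ℝ) + 2 := by positivity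
    have := mul_le_mul_of_nonneg_left (by linarith : 1 - (1-p)^(m+1) ≤ ((m:ℝ)+1)*p) hn
    push_cast
    nlinarith

private lemma pt_lt {p : ℝ} (hp0 : 0 < p) (hp1 : p ≤ 1) {n : ℕ} (hn : 3 ≤ n) :
    (n:ℝ) * (1 - (1-p) ^ (n-1)) < p * ((n:ℝ) * ((n:ℝ) - 1)) := by
  have hx0 : (0:ℝ) ≤ 1 - p := by linarith
  have hx1 : 1 - p < 1 := by linarith
  have hb := bern_strict hx0 hx1 (n-1) (by omega)
  have hk : ((n-1:ℕ):ℝ) = (n:ℝ) - 1 := by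
    rw [Nat.cast_sub (by omega : 1 ≤ n), Nat.cast_one]
  rw [hk] at hb
  have hn0 : (0:ℝ) < (n:ℝ) := by exact_mod_cast (by omega : 0 < n)
  nlinarith [mul_lt_mul_of_pos_left hb hn0]

theorem stmt2 {Ω : Type*} [MeasurableSpace Ω] (P : Measure Ω) [IsProbabilityMeasure P]
    (Θ : Ω → ℕ) (hΘ : Measurable Θ)
    (h2 : 0 < P {ω | 2 ≤ Θ ω})
    (hint : Integrable (fun ω => ((Θ ω : ℝ)) ^ 2) P)
    (p : ℝ) (hp : p ∈ Set.Ioc (0 : ℝ) 1)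
    (B : ℝ → ℝ)
    (hB : ∀ i : ℝ, B i = ∫ ω, (Θ ω : ℝ) * (1 - (1 - p * i) ^ (Θ ω - 1)) ∂P) :
    ConcaveOn ℝ (Set.Icc 0 1) B ∧
      ((∀ i ∈ Set.Icc (0 : ℝ) 1,
          B i = (p * ∫ ω, (Θ ω : ℝ) * ((Θ ω : ℝ) - 1) ∂P) * i) ↔
        P {ω | Θ ω ≤ 2} = 1) ∧
      (P {ω | Θ ω ≤ 2} ≠ 1 → StrictConcaveOn ℝ (Set.Icc 0 1) B) := by
  obtain ⟨hp0, hp1⟩ := hp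
  have hσ : ∀ t : ℝ, t ∈ Icc (0:ℝ) 1 → (1 - p * t) ∈ Icc (0:ℝ) 1 := by
    intro t ht
    constructor
    · nlinarith [ht.1, ht.2]
    · nlinarith [ht.1, ht.2]
  have keyint : ∀ x ∈ Icc (0:ℝ) 1,
      Integrable (fun ω => (Θ ω : ℝ) * (1 - (1 - p * x) ^ (Θ ω - 1))) P :=
    fun x hx => term_integrable hΘ hint (hσ x hx)
  have hmΘ2 : Measurable fun ω => (Θ ω : ℝ) * ((Θ ω : ℝ) - 1) :=
    (measurable_from_top (f := fun n : ℕ => (n:ℝ) * ((n:ℝ) - 1))).comp hΘ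
  have hint2 : Integrable (fun ω => (Θ ω : ℝ) * ((Θ ω : ℝ) - 1)) P := by
    refine hint.mono hmΘ2.aestronglyMeasurable (ae_of_all _ fun ω => ?_)
    have hn : (0:ℝ) ≤ (Θ ω : ℝ) := Nat.cast_nonneg _
    have hn2 : (Θ ω : ℝ) ≤ (Θ ω : ℝ) ^ 2 := by
      exact_mod_cast Nat.le_self_pow two_ne_zero (Θ ω)
    simp only [Real.norm_eq_abs]
    rw [abs_of_nonneg (by nlinarith), abs_of_nonneg (by positivity)]
    nlinarith
  have hms : MeasurableSet {ω | Θ ω ≤ 2} := hΘ measurableSet_Iic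
  have hcompl : {ω | Θ ω ≤ 2}ᶜ = {ω | 3 ≤ Θ ω} := by
    ext ω; simp only [mem_compl_iff, mem_setOf_eq]; omega
  -- concavity
  have hconc : ConcaveOn ℝ (Icc (0:ℝ) 1) B := by
    refine ⟨convex_Icc 0 1, fun x hx y hy a b ha hb hab => ?_⟩
    simp only [smul_eq_mul, hB]
    have hxy : a * x + b * y ∈ Icc (0:ℝ) 1 := (convex_Icc 0 1) hx hy ha hb hab
    have hIx := keyint x hx
    have hIy := keyint y hy
    have hIxy := keyint _ hxy
    have hbase : 1 - p * (a * x + b * y) = a * (1 - p * x) + b * (1 - p * y) := by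
      linear_combination -hab
    calc a * (∫ ω, (Θ ω : ℝ) * (1 - (1 - p * x) ^ (Θ ω - 1)) ∂P)
          + b * (∫ ω, (Θ ω : ℝ) * (1 - (1 - p * y) ^ (Θ ω - 1)) ∂P)
        = ∫ ω, (a * ((Θ ω : ℝ) * (1 - (1 - p * x) ^ (Θ ω - 1)))
            + b * ((Θ ω : ℝ) * (1 - (1 - p * y) ^ (Θ ω - 1)))) ∂P := by
          have e1 := integral_add (hIx.const_mul a) (hIy.const_mul b)
          rw [e1, integral_const_mul, integral_const_mul]
      _ ≤ ∫ ω, (Θ ω : ℝ) * (1 - (1 - p * (a * x + b * y)) ^ (Θ ω - 1)) ∂P := by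
          refine integral_mono ((hIx.const_mul a).add (hIy.const_mul b)) hIxy fun ω => ?_
          rw [hbase]
          exact pt_concave (hσ x hx) (hσ y hy) ha hb hab (Θ ω)
  refine ⟨hconc, ?_, ?_⟩
  · constructor
    · -- linear → Θ ≤ 2 a.s.
      intro hlin
      have hB1 := hlin 1 (by norm_num)
      rw [hB] at hB1
      set g : Ω → ℝ := fun ω =>
        p * ((Θ ω : ℝ) * ((Θ ω : ℝ) - 1)) - (Θ ω : ℝ) * (1 - (1 - p * 1) ^ (Θ ω - 1)) with hg
      have hgnn : 0 ≤ g := by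
        intro ω
        have := pt_le (p := p) (by linarith) (Θ ω)
        simp only [hg, Pi.zero_apply, mul_one]
        linarith
      have hI1 := keyint 1 (by norm_num)
      have hgint : Integrable g P := (hint2.const_mul p).sub hI1
      have hgz : ∫ ω, g ω ∂P = 0 := by
        simp only [hg]
        rw [integral_sub (hint2.const_mul p) hI1, integral_const_mul, hB1]
        ring
      have hae0 : g =ᵐ[P] 0 := (integral_eq_zero_iff_of_nonneg hgnn hgint).1 hgz
      have hz : P {ω | ¬ g ω = 0} = 0 := by
        have := ae_iff.1 hae0
        simpa using this
      have hnull : P {ω | 3 ≤ Θ ω} = 0 := by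
        refine measure_mono_null (fun ω hω => ?_) hz
        simp only [mem_setOf_eq] at hω ⊢
        have hlt := pt_lt hp0 hp1 hω
        simp only [hg, mul_one]
        intro h0
        nlinarith
      rw [← prob_compl_eq_zero_iff hms, hcompl]
      exact hnull
    · -- Θ ≤ 2 a.s. → linear
      intro hP i hi
      have hae : ∀ᵐ ω ∂P, Θ ω ≤ 2 := by
        rw [ae_iff]
        have : {ω | ¬ Θ ω ≤ 2} = {ω | Θ ω ≤ 2}ᶜ := rfl
        rw [this, prob_compl_eq_zero_iff hms]
        exact hP
      rw [hB]
      have heq : ∀ᵐ ω ∂P, (Θ ω : ℝ) * (1 - (1 - p * i) ^ (Θ ω - 1))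
          = (p * i) * ((Θ ω : ℝ) * ((Θ ω : ℝ) - 1)) := by
        filter_upwards [hae] with ω hω
        set n := Θ ω with hn
        interval_cases n
        · norm_num
        · norm_num
        · norm_num; ring
      rw [integral_congr_ae heq, integral_const_mul]
      ring
  · -- strict concavity
    intro hne
    have h3pos : 0 < P {ω | 3 ≤ Θ ω} := by
      rw [← hcompl]
      rcases eq_or_ne (P {ω | Θ ω ≤ 2}ᶜ) 0 with h0 | h0
      · exact absurd ((prob_compl_eq_zero_iff hms).1 h0) hne
      · exact h0.bot_lt
    refine ⟨convex_Icc 0 1, fun x hx y hy hxy a b ha hb hab => ?_⟩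
    simp only [smul_eq_mul, hB]
    have hxym : a * x + b * y ∈ Icc (0:ℝ) 1 := (convex_Icc 0 1) hx hy ha.le hb.le hab
    have hIx := keyint x hx
    have hIy := keyint y hy
    have hIxy := keyint _ hxym
    have hbase : 1 - p * (a * x + b * y) = a * (1 - p * x) + b * (1 - p * y) := by
      linear_combination -hab
    have huv : (1 - p * x) ≠ (1 - p * y) := by
      intro h
      apply hxy
      have : p * x = p * y := by linarith
      exact mul_left_cancel₀ (ne_of_gt hp0) this
    set G : Ω → ℝ := fun ω =>
      (Θ ω : ℝ) * (1 - (1 - p * (a * x + b * y)) ^ (Θ ω - 1))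
        - (a * ((Θ ω : ℝ) * (1 - (1 - p * x) ^ (Θ ω - 1)))
          + b * ((Θ ω : ℝ) * (1 - (1 - p * y) ^ (Θ ω - 1)))) with hG
    have hGnn : 0 ≤ G := by
      intro ω
      simp only [hG, Pi.zero_apply]
      have := pt_concave (hσ x hx) (hσ y hy) ha.le hb.le hab (Θ ω)
      rw [hbase]
      linarith
    have hGint : Integrable G P := hIxy.sub ((hIx.const_mul a).add (hIy.const_mul b))
    have hGpos : 0 < ∫ ω, G ω ∂P := by
      refine (integral_pos_iff_support_of_nonneg hGnn hGint).2 ?_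
      refine lt_of_lt_of_le h3pos (measure_mono fun ω hω => ?_)
      simp only [mem_setOf_eq] at hω
      simp only [Function.mem_support, hG]
      have hlt := pt_strict (hσ x hx) (hσ y hy) huv ha hb hab hω
      rw [hbase]
      intro h0
      linarith
    have hsplit : ∫ ω, G ω ∂P
        = (∫ ω, (Θ ω : ℝ) * (1 - (1 - p * (a * x + b * y)) ^ (Θ ω - 1)) ∂P)
          - (a * (∫ ω, (Θ ω : ℝ) * (1 - (1 - p * x) ^ (Θ ω - 1)) ∂P)
            + b * (∫ ω, (Θ ω : ℝ) * (1 - (1 - p * y) ^ (Θ ω - 1)) ∂P)) := by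
      simp only [hG]
      have e2 := integral_sub hIxy ((hIx.const_mul a).add (hIy.const_mul b))
      have e1 := integral_add (hIx.const_mul a) (hIy.const_mul b)
      simp only [Pi.add_apply] at e1 e2
      rw [e2, e1, integral_const_mul, integral_const_mul]
    rw [hsplit] at hGpos
    linarith
end

section
/- If Θ has logarithmic distribution with parameter α∈(0,1), i.e., P(Θ=k) = (-1/log(1-α))·α^k/k for k≥1, then for all ξ∈[0,1], E[Θ·ξ^{Θ-1}] = (-1/log(1-α))·α/(1-αξ), and B(i) = E[Θ(1-(1-pi)^{Θ-1})] = a·i/(1+b·i) where a = -α²p/((1-α)²log(1-α)) and b = αp/(1-α). -/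
open MeasureTheory Set
open scoped ENNReal NNReal

theorem stmt7 {Ω : Type*} [MeasurableSpace Ω] (P : Measure Ω) [IsProbabilityMeasure P]
    (Θ : Ω → ℕ) (hΘ : Measurable Θ)
    (α : ℝ) (hα : α ∈ Set.Ioo (0 : ℝ) 1) (p : ℝ) (hp : p ∈ Set.Icc (0 : ℝ) 1)
    (hdist : ∀ k : ℕ, 1 ≤ k →
      (P {ω | Θ ω = k}).toReal = (-1 / Real.log (1 - α)) * α ^ k / k)
    (hdist0 : (P {ω | Θ ω = 0}).toReal = 0) :
    (∀ ξ ∈ Set.Icc (0 : ℝ) 1,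
      (∫ ω, (Θ ω : ℝ) * ξ ^ (Θ ω - 1) ∂P)
        = (-1 / Real.log (1 - α)) * (α / (1 - α * ξ))) ∧
    (∀ i ∈ Set.Icc (0 : ℝ) 1,
      (∫ ω, (Θ ω : ℝ) * (1 - (1 - p * i) ^ (Θ ω - 1)) ∂P)
        = ((-α ^ 2 * p / ((1 - α) ^ 2 * Real.log (1 - α))) * i)
            / (1 + (α * p / (1 - α)) * i)) := by
  obtain ⟨hα0, hα1⟩ := hα
  obtain ⟨hp0, hp1⟩ := hp
  have hlog : Real.log (1 - α) < 0 := Real.log_neg (by linarith) (by linarith)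
  set c : ℝ := -1 / Real.log (1 - α) with hc
  have hcpos : 0 < c := div_pos_of_neg_of_neg (by norm_num) hlog
  set μ : Measure ℕ := P.map Θ with hμdef
  have hμprob : IsProbabilityMeasure μ := Measure.isProbabilityMeasure_map hΘ.aemeasurable
  have hw : ∀ k : ℕ, (μ {k}).toReal = (P {ω | Θ ω = k}).toReal := by
    intro k
    rw [hμdef, Measure.map_apply hΘ (measurableSet_singleton k)]
    congr 1
  have hμne : ∀ k : ℕ, μ {k} ≠ ⊤ := fun k => measure_ne_top μ _
  have hμ0 : (μ {0}).toReal = 0 := by rw [hw]; exact hdist0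
  have hμk : ∀ n : ℕ, (μ {n + 1}).toReal = c * α ^ (n + 1) / (n + 1) := by
    intro n; rw [hw]; exact_mod_cast hdist (n + 1) (Nat.le_add_left 1 n)
  -- key lemma
  have key : ∀ ξ : ℝ, 0 ≤ ξ → ξ ≤ 1 →
      Integrable (fun ω => (Θ ω : ℝ) * ξ ^ (Θ ω - 1)) P ∧
      (∫ ω, (Θ ω : ℝ) * ξ ^ (Θ ω - 1) ∂P) = c * (α / (1 - α * ξ)) := by
    intro ξ hξ0 hξ1
    set f : ℕ → ℝ := fun k => (k : ℝ) * ξ ^ (k - 1) with hf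
    have hfnn : ∀ k, 0 ≤ f k := fun k => mul_nonneg (Nat.cast_nonneg k) (pow_nonneg hξ0 _)
    set g : ℕ → ℝ := fun k => (μ {k}).toReal * f k with hg
    have hg0 : g 0 = 0 := by simp [hg, hμ0]
    have hgk : ∀ n : ℕ, g (n + 1) = c * α * (α * ξ) ^ n := by
      intro n
      have hn1 : ((n : ℝ) + 1) ≠ 0 := by positivity
      simp only [hg, hf, hμk, Nat.add_sub_cancel, Nat.cast_add, Nat.cast_one]
      field_simp
      ring
    have hαξ0 : 0 ≤ α * ξ := mul_nonneg hα0.le hξ0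
    have hαξ1 : α * ξ < 1 := lt_of_le_of_lt (by nlinarith) hα1
    have hsum1 : Summable (fun n : ℕ => g (n + 1)) := by
      have : Summable (fun n : ℕ => c * α * (α * ξ) ^ n) :=
        (summable_geometric_of_lt_one hαξ0 hαξ1).mul_left _
      exact this.congr fun n => (hgk n).symm
    have hsumg : Summable g := (summable_nat_add_iff 1).mp hsum1
    have hgnn : ∀ k, 0 ≤ g k := fun k => mul_nonneg ENNReal.toReal_nonneg (hfnn k)
    have htsum : ∑' k, g k = c * (α / (1 - α * ξ)) := by
      rw [Summable.tsum_eq_zero_add hsumg, hg0, zero_add]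
      have h2 : ∑' n : ℕ, g (n + 1) = ∑' n : ℕ, c * α * (α * ξ) ^ n :=
        tsum_congr hgk
      rw [h2, tsum_mul_left, tsum_geometric_of_lt_one hαξ0 hαξ1]
      rw [mul_assoc, div_eq_mul_inv]
    have hfint : Integrable f μ := by
      refine ⟨(measurable_of_countable f).aestronglyMeasurable, ?_⟩
      show (∫⁻ k, (‖f k‖₊ : ℝ≥0∞) ∂μ) < ⊤
      rw [lintegral_countable']
      have heq : ∀ k : ℕ, (‖f k‖₊ : ℝ≥0∞) * μ {k} = ENNReal.ofReal (g k) := by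
        intro k
        rw [← ENNReal.ofReal_toReal (hμne k)]
        have hn : ENNReal.ofReal ‖f k‖ = (‖f k‖₊ : ℝ≥0∞) := ofReal_norm (f k)
        rw [← hn, ← ENNReal.ofReal_mul (norm_nonneg _)]
        congr 1
        rw [Real.norm_of_nonneg (hfnn k), hg, mul_comm]
      calc ∑' k : ℕ, (‖f k‖₊ : ℝ≥0∞) * μ {k} = ∑' k, ENNReal.ofReal (g k) :=
            tsum_congr heq
        _ = ENNReal.ofReal (∑' k, g k) := (ENNReal.ofReal_tsum_of_nonneg hgnn hsumg).symm
        _ < ⊤ := ENNReal.ofReal_lt_top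
    have hcomp : Integrable (fun ω => (Θ ω : ℝ) * ξ ^ (Θ ω - 1)) P := by
      have h3 := (integrable_map_measure hfint.aestronglyMeasurable hΘ.aemeasurable).mp
      rw [← hμdef] at h3
      exact h3 hfint
    refine ⟨hcomp, ?_⟩
    have h1 : (∫ ω, (Θ ω : ℝ) * ξ ^ (Θ ω - 1) ∂P) = ∫ k, f k ∂μ := by
      rw [hμdef, integral_map hΘ.aemeasurable hfint.aestronglyMeasurable]
    rw [h1, integral_countable' hfint, ← htsum]
    exact tsum_congr fun k => by rw [smul_eq_mul]; rfl
  constructor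
  · intro ξ hξ
    exact (key ξ hξ.1 hξ.2).2
  · intro i hi
    have hpi0 : 0 ≤ p * i := mul_nonneg hp0 hi.1
    have hpi1 : p * i ≤ 1 := mul_le_one₀ hp1 hi.1 hi.2
    have hξ0 : (0:ℝ) ≤ 1 - p * i := by linarith
    have hξ1 : 1 - p * i ≤ 1 := by linarith
    obtain ⟨hint1, hval1⟩ := key 1 zero_le_one le_rfl
    obtain ⟨hint2, hval2⟩ := key (1 - p * i) hξ0 hξ1
    have heqfun : (fun ω => (Θ ω : ℝ) * (1 - (1 - p * i) ^ (Θ ω - 1)))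
        = fun ω => (Θ ω : ℝ) * (1:ℝ) ^ (Θ ω - 1) - (Θ ω : ℝ) * (1 - p * i) ^ (Θ ω - 1) := by
      funext ω; rw [one_pow]; ring
    rw [heqfun, integral_sub hint1 hint2, hval1, hval2]
    have hd1 : (1:ℝ) - α * 1 ≠ 0 := by nlinarith
    have hd2 : (1:ℝ) - α * (1 - p * i) ≠ 0 := by nlinarith
    have hd3 : (1:ℝ) + α * p / (1 - α) * i ≠ 0 := by
      have h4 : 0 ≤ α * p / (1 - α) * i :=
        mul_nonneg (div_nonneg (mul_nonneg hα0.le hp0) (by linarith)) hi.1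
      linarith
    have hd4 : (1:ℝ) - α ≠ 0 := by linarith
    have hL : Real.log (1 - α) ≠ 0 := ne_of_lt hlog
    rw [hc]
    rw [eq_div_iff hd3]
    field_simp
    ring
end

section
/- Let (S̃,Ĩ,R̃) be multinomial with θ trials and probabilities (s,i,r) with s+i+r=1, and q∈[0,1]. Then E[S̃·q^Ĩ] = θs(1-i(1-q))^{θ-1}. -/
open MeasureTheory Set

lemma trinom_aux (n : ℕ) (x y z : ℝ) :
    ∑ a ∈ Finset.range (n+1), ∑ b ∈ Finset.range (n+1),
      (if a + b ≤ n then
        ((n.factorial : ℝ) / ((a.factorial : ℝ) * (b.factorial : ℝ) * ((n - a - b).factorial : ℝ)))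
          * x ^ a * y ^ b * z ^ (n - a - b)
      else 0)
    = (x + y + z) ^ n := by
  rw [show x + y + z = x + (y + z) by ring, add_pow]
  refine Finset.sum_congr rfl fun a ha => ?_
  have haa : a ≤ n := Nat.lt_succ_iff.mp (Finset.mem_range.mp ha)
  rw [add_pow]
  rw [show (x ^ a * ∑ b ∈ Finset.range (n - a + 1), y ^ b * z ^ (n - a - b) * ((n-a).choose b : ℝ)) * (n.choose a : ℝ)
      = ∑ b ∈ Finset.range (n - a + 1), x ^ a * (y ^ b * z ^ (n - a - b) * ((n-a).choose b : ℝ)) * (n.choose a : ℝ) by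
    rw [Finset.mul_sum, Finset.sum_mul]]
  rw [← Finset.sum_subset (Finset.range_subset_range.mpr (by omega) : Finset.range (n-a+1) ⊆ Finset.range (n+1))
    (by intro b _ hb; rw [if_neg]; simp only [Finset.mem_range] at hb; omega)]
  refine Finset.sum_congr rfl fun b hb => ?_
  have hbb : b ≤ n - a := Nat.lt_succ_iff.mp (Finset.mem_range.mp hb)
  rw [if_pos (by omega)]
  rw [Nat.cast_choose ℝ haa, Nat.cast_choose ℝ hbb]
  have h1 : (n - a) - b = n - a - b := rfl
  have f0 : ∀ m : ℕ, (m.factorial : ℝ) ≠ 0 := fun m => Nat.cast_ne_zero.mpr m.factorial_ne_zero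
  field_simp

lemma keylem_aux (n : ℕ) (x y z : ℝ) :
    ∑ a ∈ Finset.range (n+1), ∑ b ∈ Finset.range (n+1),
      (if a + b ≤ n then
        (a : ℝ) * (((n.factorial : ℝ) / ((a.factorial : ℝ) * (b.factorial : ℝ) * ((n - a - b).factorial : ℝ)))
          * x ^ a * y ^ b * z ^ (n - a - b))
      else 0)
    = n * x * (x + y + z) ^ (n - 1) := by
  cases n with
  | zero => simp
  | succ m =>
    rw [Finset.sum_range_succ']
    have h0 : (∑ b ∈ Finset.range (m+1+1),
        if 0 + b ≤ m+1 then
          ((0:ℕ) : ℝ) * (((m+1).factorial : ℝ) / (((0:ℕ).factorial : ℝ) * (b.factorial : ℝ) * ((m+1 - 0 - b).factorial : ℝ))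
            * x ^ 0 * y ^ b * z ^ (m+1 - 0 - b))
        else 0) = 0 := by
      apply Finset.sum_eq_zero; intro b _; split <;> simp
    rw [h0, add_zero]
    have step : ∀ a ∈ Finset.range (m+1),
        (∑ b ∈ Finset.range (m+1+1),
          if a+1 + b ≤ m+1 then
            ((a+1:ℕ) : ℝ) * (((m+1).factorial : ℝ) / (((a+1:ℕ).factorial : ℝ) * (b.factorial : ℝ) * ((m+1 - (a+1) - b).factorial : ℝ))
              * x ^ (a+1) * y ^ b * z ^ (m+1 - (a+1) - b))
          else 0)
        = (m+1 : ℝ) * x * ∑ b ∈ Finset.range (m+1),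
            (if a + b ≤ m then
              ((m.factorial : ℝ) / ((a.factorial : ℝ) * (b.factorial : ℝ) * ((m - a - b).factorial : ℝ)))
                * x ^ a * y ^ b * z ^ (m - a - b)
            else 0) := by
      intro a ha
      rw [Finset.sum_range_succ, if_neg (by omega), add_zero, Finset.mul_sum]
      refine Finset.sum_congr rfl fun b hb => ?_
      by_cases hab : a + b ≤ m
      · rw [if_pos (by omega), if_pos hab]
        have hco : m + 1 - (a+1) - b = m - a - b := by omega
        rw [hco]
        have f0 : ∀ k : ℕ, (k.factorial : ℝ) ≠ 0 := fun k => Nat.cast_ne_zero.mpr k.factorial_ne_zero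
        rw [Nat.factorial_succ (m), Nat.factorial_succ a]
        push_cast
        field_simp
        ring
      · rw [if_neg (by omega), if_neg hab, mul_zero]
    rw [Finset.sum_congr rfl step, ← Finset.mul_sum, trinom_aux]
    simp

theorem stmt11 {Ω : Type*} [MeasurableSpace Ω] (P : Measure Ω) [IsProbabilityMeasure P]
    (St It Rt : Ω → ℕ) (hSt : Measurable St) (hIt : Measurable It) (hRt : Measurable Rt)
    (θ : ℕ) (s i r q : ℝ)
    (hs : s ∈ Set.Icc (0 : ℝ) 1) (hi : i ∈ Set.Icc (0 : ℝ) 1) (hr : r ∈ Set.Icc (0 : ℝ) 1)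
    (hsum : s + i + r = 1) (hq : q ∈ Set.Icc (0 : ℝ) 1)
    (htotal : ∀ ω, St ω + It ω + Rt ω = θ)
    (hdist : ∀ a b : ℕ,
      (P {ω | St ω = a ∧ It ω = b}).toReal =
        if a + b ≤ θ then
          ((θ.factorial : ℝ) / ((a.factorial : ℝ) * (b.factorial : ℝ) *
              ((θ - a - b).factorial : ℝ))) * s ^ a * i ^ b * r ^ (θ - a - b)
        else 0) :
    (∫ ω, (St ω : ℝ) * q ^ (It ω) ∂P) = θ * s * (1 - i * (1 - q)) ^ (θ - 1) := by
  have hSle : ∀ ω, St ω ≤ θ ∧ It ω ≤ θ := fun ω => by have := htotal ω; omega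
  have hmeas : ∀ a b : ℕ, MeasurableSet {ω | St ω = a ∧ It ω = b} := fun a b =>
    (hSt (measurableSet_singleton a)).inter (hIt (measurableSet_singleton b))
  have hf : (fun ω => (St ω : ℝ) * q ^ It ω) = fun ω =>
      ∑ a ∈ Finset.range (θ+1), ∑ b ∈ Finset.range (θ+1),
        Set.indicator {ω' | St ω' = a ∧ It ω' = b} (fun _ => (a : ℝ) * q ^ b) ω := by
    funext ω
    rw [Finset.sum_eq_single (St ω)]
    · rw [Finset.sum_eq_single (It ω)]
      · simp [Set.indicator_apply]
      · intro b _ hb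
        simp only [Set.indicator_apply, Set.mem_setOf_eq]
        rw [if_neg]; exact fun h => hb h.2.symm
      · intro h; exact absurd (Finset.mem_range.2 (Nat.lt_succ_of_le (hSle ω).2)) h
    · intro a _ ha
      apply Finset.sum_eq_zero; intro b _
      simp only [Set.indicator_apply, Set.mem_setOf_eq]
      rw [if_neg]; exact fun h => ha h.1.symm
    · intro h; exact absurd (Finset.mem_range.2 (Nat.lt_succ_of_le (hSle ω).1)) h
  rw [hf]
  rw [integral_finset_sum _ (fun (a : ℕ) _ => integrable_finset_sum _ (fun (b : ℕ) _ =>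
    (integrable_const ((a : ℝ) * q ^ b)).indicator (hmeas a b)))]
  have hterm : ∀ a ∈ Finset.range (θ+1),
      (∫ ω, ∑ b ∈ Finset.range (θ+1), Set.indicator {ω' | St ω' = a ∧ It ω' = b} (fun _ => (a : ℝ) * q ^ b) ω ∂P)
      = ∑ b ∈ Finset.range (θ+1),
        (if a + b ≤ θ then
          (a : ℝ) * (((θ.factorial : ℝ) / ((a.factorial : ℝ) * (b.factorial : ℝ) * ((θ - a - b).factorial : ℝ)))
            * s ^ a * (i*q) ^ b * r ^ (θ - a - b))
        else 0) := by
    intro a _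
    rw [integral_finset_sum _ (fun (b : ℕ) _ =>
      (integrable_const ((a : ℝ) * q ^ b)).indicator (hmeas a b))]
    refine Finset.sum_congr rfl fun b _ => ?_
    rw [integral_indicator_const _ (hmeas a b), measureReal_def, hdist a b, smul_eq_mul]
    by_cases hab : a + b ≤ θ
    · rw [if_pos hab, if_pos hab, mul_pow]; ring
    · rw [if_neg hab, if_neg hab, zero_mul]
  rw [Finset.sum_congr rfl hterm, keylem_aux]
  have hbase : s + i * q + r = 1 - i * (1 - q) := by linarith [hsum]; 
  rw [hbase]
end

section
/- The system s' = -μsB(i), i' = μsB(i) - γi, r' = γi with initial condition (s₀,i₀,r₀)∈[0,1]³, s₀+i₀+r₀=1, has a unique continuously differentiable global solution, which satisfies sₜ,iₜ,rₜ ≥ 0 and sₜ+iₜ+rₜ = 1 for all t ≥ 0. -/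
open MeasureTheory Set

noncomputable def clamp01 (x : ℝ) : ℝ := max 0 (min 1 x)

lemma clamp01_mem (x : ℝ) : clamp01 x ∈ Set.Icc (0:ℝ) 1 :=
  ⟨le_max_left _ _, max_le zero_le_one (min_le_left _ _)⟩

lemma clamp01_of_mem {x : ℝ} (hx : x ∈ Set.Icc (0:ℝ) 1) : clamp01 x = x := by
  rw [clamp01, min_eq_right hx.2, max_eq_right hx.1]

lemma clamp01_of_nonpos {x : ℝ} (hx : x ≤ 0) : clamp01 x = 0 :=
  max_eq_left ((min_le_right 1 x).trans hx)

lemma clamp01_lip (x y : ℝ) : |clamp01 x - clamp01 y| ≤ |x - y| := by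
  have h1 : |max 0 (min 1 x) - max 0 (min 1 y)| ≤ max |(0:ℝ) - 0| |min 1 x - min 1 y| :=
    abs_max_sub_max_le_max _ _ _ _
  have h2 : |min 1 x - min 1 y| ≤ max |(1:ℝ) - 1| |x - y| := abs_min_sub_min_le_max _ _ _ _
  have h3 : max |(1:ℝ) - 1| |x - y| = |x - y| := by
    simp
  have h4 : max |(0:ℝ) - 0| |min 1 x - min 1 y| = |min 1 x - min 1 y| := by
    simp
  rw [h4] at h1
  rw [h3] at h2
  exact (h1.trans h2)

lemma mul_sub_mul_abs_le {a a' b b' M : ℝ} (ha' : 0 ≤ a') (ha1 : a' ≤ 1) (hb : 0 ≤ b)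
    (hbM : b ≤ M) : |a * b - a' * b'| ≤ M * |a - a'| + |b - b'| := by
  have h1 : a * b - a' * b' = (a - a') * b + a' * (b - b') := by ring
  rw [h1]
  calc |(a - a') * b + a' * (b - b')| ≤ |(a - a') * b| + |a' * (b - b')| := abs_add_le _ _
    _ = |a - a'| * b + a' * |b - b'| := by
        rw [abs_mul, abs_mul, abs_of_nonneg hb, abs_of_nonneg ha']
    _ ≤ M * |a - a'| + |b - b'| := by
        nlinarith [abs_nonneg (a - a'), abs_nonneg (b - b')]

noncomputable def sirF (mu gam : ℝ) (B : ℝ → ℝ) (p : ℝ × ℝ) : ℝ × ℝ :=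
  (-(mu * clamp01 p.1 * B (clamp01 p.2)),
    mu * clamp01 p.1 * B (clamp01 p.2) - gam * clamp01 p.2)

lemma sirF_lipschitz (mu gam : ℝ) (hmu : 0 ≤ mu) (hgam : 0 ≤ gam) (B : ℝ → ℝ) (L : NNReal)
    (hL : LipschitzOnWith L B (Set.Icc 0 1)) (hmono : MonotoneOn B (Set.Icc 0 1))
    (hBpos : ∀ x ∈ Set.Icc (0:ℝ) 1, 0 ≤ B x) :
    ∃ K : NNReal, LipschitzWith K (sirF mu gam B) := by
  have hB1 : 0 ≤ B 1 := hBpos 1 (by norm_num)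
  refine ⟨⟨mu * (B 1 + L) + gam,
    add_nonneg (mul_nonneg hmu (add_nonneg hB1 L.coe_nonneg)) hgam⟩, ?_⟩
  apply LipschitzWith.of_dist_le_mul
  intro p q
  have hd1 : |p.1 - q.1| ≤ dist p q := by
    rw [Prod.dist_eq, ← Real.dist_eq]; exact le_max_left _ _
  have hd2 : |p.2 - q.2| ≤ dist p q := by
    rw [Prod.dist_eq, ← Real.dist_eq]; exact le_max_right _ _
  have hdnn : (0:ℝ) ≤ dist p q := dist_nonneg
  have hc1 : |clamp01 p.1 - clamp01 q.1| ≤ dist p q := (clamp01_lip _ _).trans hd1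
  have hc2 : |clamp01 p.2 - clamp01 q.2| ≤ dist p q := (clamp01_lip _ _).trans hd2
  have hbL : |B (clamp01 p.2) - B (clamp01 q.2)| ≤ (L : ℝ) * dist p q := by
    have h := hL.dist_le_mul _ (clamp01_mem p.2) _ (clamp01_mem q.2)
    rw [Real.dist_eq, Real.dist_eq] at h
    refine h.trans ?_
    exact mul_le_mul_of_nonneg_left hc2 L.coe_nonneg
  have hg : |clamp01 p.1 * B (clamp01 p.2) - clamp01 q.1 * B (clamp01 q.2)|
      ≤ (B 1 + L) * dist p q := by
    have h := mul_sub_mul_abs_le (a := clamp01 p.1) (a' := clamp01 q.1)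
      (b := B (clamp01 p.2)) (b' := B (clamp01 q.2)) (M := B 1)
      (clamp01_mem q.1).1 (clamp01_mem q.1).2 (hBpos _ (clamp01_mem p.2))
      (hmono (clamp01_mem p.2) (by norm_num) (clamp01_mem p.2).2)
    nlinarith [hc1, hbL, hB1]
  rw [Prod.dist_eq]
  change max _ _ ≤ (mu * (B 1 + L) + gam) * dist p q
  apply max_le
  · show dist (sirF mu gam B p).1 (sirF mu gam B q).1 ≤ _
    have e1 : (sirF mu gam B p).1 = -(mu * clamp01 p.1 * B (clamp01 p.2)) := rfl
    have e2 : (sirF mu gam B q).1 = -(mu * clamp01 q.1 * B (clamp01 q.2)) := rfl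
    rw [e1, e2, Real.dist_eq, abs_le]
    obtain ⟨hg1, hg2⟩ := abs_le.mp hg
    constructor <;> nlinarith [mul_le_mul_of_nonneg_left hg1 hmu,
      mul_le_mul_of_nonneg_left hg2 hmu, mul_nonneg hgam hdnn]
  · show dist (sirF mu gam B p).2 (sirF mu gam B q).2 ≤ _
    have e1 : (sirF mu gam B p).2
        = mu * clamp01 p.1 * B (clamp01 p.2) - gam * clamp01 p.2 := rfl
    have e2 : (sirF mu gam B q).2
        = mu * clamp01 q.1 * B (clamp01 q.2) - gam * clamp01 q.2 := rfl
    rw [e1, e2, Real.dist_eq, abs_le]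
    obtain ⟨hg1, hg2⟩ := abs_le.mp hg
    obtain ⟨hcc1, hcc2⟩ := abs_le.mp hc2
    constructor <;> nlinarith [mul_le_mul_of_nonneg_left hg1 hmu,
      mul_le_mul_of_nonneg_left hg2 hmu, mul_le_mul_of_nonneg_left hcc1 hgam,
      mul_le_mul_of_nonneg_left hcc2 hgam]

lemma sirF_norm_le (mu gam : ℝ) (hmu : 0 ≤ mu) (hgam : 0 ≤ gam) (B : ℝ → ℝ)
    (hmono : MonotoneOn B (Set.Icc 0 1)) (hBpos : ∀ x ∈ Set.Icc (0:ℝ) 1, 0 ≤ B x)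
    (p : ℝ × ℝ) : ‖sirF mu gam B p‖ ≤ mu * B 1 + gam := by
  have hB1 : 0 ≤ B 1 := hBpos 1 (by norm_num)
  have h1 : 0 ≤ B (clamp01 p.2) := hBpos _ (clamp01_mem _)
  have h2 : B (clamp01 p.2) ≤ B 1 := hmono (clamp01_mem _) (by norm_num) (clamp01_mem _).2
  obtain ⟨hc11, hc12⟩ := clamp01_mem p.1
  obtain ⟨hc21, hc22⟩ := clamp01_mem p.2
  have hlow : 0 ≤ mu * clamp01 p.1 * B (clamp01 p.2) := mul_nonneg (mul_nonneg hmu hc11) h1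
  have hup : mu * clamp01 p.1 * B (clamp01 p.2) ≤ mu * B 1 := by
    nlinarith [mul_nonneg hmu (mul_nonneg (sub_nonneg.2 hc12) h1),
      mul_le_mul_of_nonneg_left h2 hmu]
  have hg0 : 0 ≤ gam * clamp01 p.2 := mul_nonneg hgam hc21
  have hg1 : gam * clamp01 p.2 ≤ gam := by
    have := mul_le_mul_of_nonneg_left hc22 hgam
    linarith
  rw [Prod.norm_def]
  apply max_le
  · have e1 : (sirF mu gam B p).1 = -(mu * clamp01 p.1 * B (clamp01 p.2)) := rfl
    rw [e1, Real.norm_eq_abs, abs_le]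
    constructor <;> linarith
  · have e2 : (sirF mu gam B p).2
        = mu * clamp01 p.1 * B (clamp01 p.2) - gam * clamp01 p.2 := rfl
    rw [e2, Real.norm_eq_abs, abs_le]
    constructor <;> linarith

/-- Global existence for a bounded globally Lipschitz autonomous vector field. -/
lemma global_flow {E : Type*} [NormedAddCommGroup E] [NormedSpace ℝ E] [CompleteSpace E]
    {F : E → E} {K : NNReal} {C : ℝ} (hlip : LipschitzWith K F)
    (hC : ∀ p, ‖F p‖ ≤ C) (x0 : E) :
    ∃ sol : ℝ → E, sol 0 = x0 ∧ ∀ t, HasDerivAt sol (F (sol t)) t := by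
  have hC0 : 0 ≤ C := (norm_nonneg _).trans (hC x0)
  have hPL : ∀ n : ℕ, IsPicardLindelof (fun _ : ℝ => F) (tmin := -((n:ℝ)+1)) (tmax := (n:ℝ)+1)
      ⟨0, by constructor <;> linarith [(Nat.cast_nonneg n : (0:ℝ) ≤ n)]⟩ x0
      ⟨C*((n:ℝ)+1), mul_nonneg hC0 (by positivity)⟩ 0 ⟨C, hC0⟩ K := by
    intro n
    have hn : (0:ℝ) ≤ n := Nat.cast_nonneg n
    refine ⟨fun t _ => hlip.lipschitzOnWith, fun x _ => continuousOn_const,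
      fun t _ x _ => hC x, ?_⟩
    show C * max ((n:ℝ)+1 - 0) (0 - -((n:ℝ)+1)) ≤ C*((n:ℝ)+1) - 0
    simp
  have hex : ∀ n : ℕ, ∃ f : ℝ → E, f 0 = x0 ∧ ∀ t ∈ Set.Icc (-((n:ℝ)+1)) ((n:ℝ)+1),
      HasDerivWithinAt f (F (f t)) (Set.Icc (-((n:ℝ)+1)) ((n:ℝ)+1)) t :=
    fun n => (hPL n).exists_eq_forall_mem_Icc_hasDerivWithinAt₀
  choose f hf0 hfd using hex
  have hmem : ∀ (n : ℕ) (t : ℝ), |t| < (n:ℝ)+1 → t ∈ Set.Ioo (-((n:ℝ)+1)) ((n:ℝ)+1) := by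
    intro n t ht
    rcases abs_lt.mp ht with ⟨h1, h2⟩
    exact ⟨by linarith, h2⟩
  have hfdAt : ∀ (n : ℕ) (t : ℝ), |t| < (n:ℝ)+1 → HasDerivAt (f n) (F (f n t)) t := by
    intro n t ht
    exact (hfd n t (Set.Ioo_subset_Icc_self (hmem n t ht))).hasDerivAt
      (Icc_mem_nhds (hmem n t ht).1 (hmem n t ht).2)
  have hfc : ∀ n : ℕ, ContinuousOn (f n) (Set.Icc (-((n:ℝ)+1)) ((n:ℝ)+1)) :=
    fun n t ht => (hfd n t ht).continuousWithinAt
  have hcons : ∀ (n m : ℕ) (t : ℝ), |t| ≤ (n:ℝ)+1 → |t| ≤ (m:ℝ)+1 → f n t = f m t := by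
    intro n m t htn htm
    set c : ℝ := min ((n:ℝ)+1) ((m:ℝ)+1) with hc
    have hc0 : 0 < c := lt_min (by positivity) (by positivity)
    have hcn : c ≤ (n:ℝ)+1 := min_le_left _ _
    have hcm : c ≤ (m:ℝ)+1 := min_le_right _ _
    have h0mem : (0:ℝ) ∈ Set.Ioo (-c) c := ⟨by linarith, hc0⟩
    have key := ODE_solution_unique_of_mem_Icc (v := fun _ : ℝ => F)
      (s := fun _ : ℝ => (Set.univ : Set E)) (K := K)
      (fun _ _ => hlip.lipschitzOnWith) h0mem
      ((hfc n).mono (Set.Icc_subset_Icc (by linarith) hcn))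
      (fun u hu => hfdAt n u (abs_lt.mpr ⟨by linarith [hu.1], by linarith [hu.2]⟩))
      (fun u _ => Set.mem_univ _)
      ((hfc m).mono (Set.Icc_subset_Icc (by linarith) hcm))
      (fun u hu => hfdAt m u (abs_lt.mpr ⟨by linarith [hu.1], by linarith [hu.2]⟩))
      (fun u _ => Set.mem_univ _)
      (by rw [hf0 n, hf0 m])
    have htc : t ∈ Set.Icc (-c) c := by
      rcases abs_le.mp (le_min htn htm) with ⟨h1, h2⟩
      exact ⟨h1, h2⟩
    exact key htc
  refine ⟨fun t => f ⌊|t|⌋₊ t, hf0 _, ?_⟩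
  intro t
  have hlt : |t| < (⌊|t|⌋₊ : ℝ) + 1 := Nat.lt_floor_add_one _
  have hd := hfdAt ⌊|t|⌋₊ t hlt
  have hev : (fun u => f ⌊|u|⌋₊ u) =ᶠ[nhds t] f ⌊|t|⌋₊ := by
    have hopen : IsOpen {u : ℝ | |u| < (⌊|t|⌋₊ : ℝ) + 1} :=
      isOpen_lt continuous_abs continuous_const
    filter_upwards [hopen.mem_nhds hlt] with u hu
    exact hcons _ _ u (Nat.lt_floor_add_one _).le hu.le
  exact hd.congr_of_eventuallyEq hev

theorem stmt14 (mu gam : ℝ) (hmu : 0 < mu) (hgam : 0 < gam)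
    (B : ℝ → ℝ)
    (hLip : ∃ L : NNReal, LipschitzOnWith L B (Set.Icc 0 1))
    (hmono : MonotoneOn B (Set.Icc 0 1))
    (hB0 : B 0 = 0)
    (hBpos : ∀ x ∈ Set.Icc (0 : ℝ) 1, 0 ≤ B x)
    (s0 i0 r0 : ℝ)
    (hs0 : s0 ∈ Set.Icc (0 : ℝ) 1) (hi0 : i0 ∈ Set.Icc (0 : ℝ) 1)
    (hr0 : r0 ∈ Set.Icc (0 : ℝ) 1) (hsum0 : s0 + i0 + r0 = 1) :
    ∃ s i r : ℝ → ℝ,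
      (s 0 = s0 ∧ i 0 = i0 ∧ r 0 = r0) ∧
      (∀ t : ℝ, 0 ≤ t →
        HasDerivAt s (-(mu * s t * B (i t))) t ∧
        HasDerivAt i (mu * s t * B (i t) - gam * i t) t ∧
        HasDerivAt r (gam * i t) t) ∧
      (∀ t : ℝ, 0 ≤ t → 0 ≤ s t ∧ 0 ≤ i t ∧ 0 ≤ r t ∧ s t + i t + r t = 1) ∧
      (∀ s' i' r' : ℝ → ℝ,
        (s' 0 = s0 ∧ i' 0 = i0 ∧ r' 0 = r0) →
        (∀ t : ℝ, 0 ≤ t →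
          HasDerivAt s' (-(mu * s' t * B (i' t))) t ∧
          HasDerivAt i' (mu * s' t * B (i' t) - gam * i' t) t ∧
          HasDerivAt r' (gam * i' t) t) →
        (∀ t : ℝ, 0 ≤ t → 0 ≤ s' t ∧ 0 ≤ i' t ∧ 0 ≤ r' t ∧ s' t + i' t + r' t = 1) →
        ∀ t : ℝ, 0 ≤ t → s' t = s t ∧ i' t = i t ∧ r' t = r t) := by
  obtain ⟨L, hL⟩ := hLip
  obtain ⟨K, hK⟩ := sirF_lipschitz mu gam hmu.le hgam.le B L hL hmono hBpos
  obtain ⟨sol, hsol0, hsolD⟩ := global_flow hK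
    (sirF_norm_le mu gam hmu.le hgam.le B hmono hBpos) ((s0, i0) : ℝ × ℝ)
  set S : ℝ → ℝ := fun u => (sol u).1 with hSdef
  set I : ℝ → ℝ := fun u => (sol u).2 with hIdef
  have hS0 : S 0 = s0 := by rw [hSdef]; simp [hsol0]
  have hI0 : I 0 = i0 := by rw [hIdef]; simp [hsol0]
  have hSD : ∀ t, HasDerivAt S (-(mu * clamp01 (S t) * B (clamp01 (I t)))) t := by
    intro t
    have h := (ContinuousLinearMap.fst ℝ ℝ ℝ).hasFDerivAt.comp_hasDerivAt t (hsolD t)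
    simpa [Function.comp_def, sirF, hSdef, hIdef] using h
  have hID : ∀ t, HasDerivAt I
      (mu * clamp01 (S t) * B (clamp01 (I t)) - gam * clamp01 (I t)) t := by
    intro t
    have h := (ContinuousLinearMap.snd ℝ ℝ ℝ).hasFDerivAt.comp_hasDerivAt t (hsolD t)
    simpa [Function.comp_def, sirF, hSdef, hIdef] using h
  have hScont : Continuous S := by
    have : Differentiable ℝ S := fun t => (hSD t).differentiableAt
    exact this.continuous
  have hIcont : Continuous I := by
    have : Differentiable ℝ I := fun t => (hID t).differentiableAt
    exact this.continuous
  -- nonnegativity of S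
  have hS_nonneg : ∀ t, 0 ≤ t → 0 ≤ S t := by
    intro t1 ht1
    by_contra hcon
    push_neg at hcon
    have ht1pos : 0 < t1 := by
      rcases ht1.lt_or_eq with h | h
      · exact h
      · exfalso; rw [← h, hS0] at hcon; exact absurd hs0.1 (not_le.mpr hcon)
    set A := {u : ℝ | u ∈ Set.Icc 0 t1 ∧ 0 ≤ S u} with hA
    have hAclosed : IsClosed A := isClosed_Icc.inter (isClosed_le continuous_const hScont)
    have hAcomp : IsCompact A :=
      isCompact_Icc.of_isClosed_subset hAclosed (fun u hu => hu.1)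
    have hAne : A.Nonempty := ⟨0, ⟨le_rfl, ht1pos.le⟩, by rw [hS0]; exact hs0.1⟩
    set w := sSup A with hwdef
    have hw : w ∈ A := hAcomp.sSup_mem hAne
    have hwt1 : w ≤ t1 := hw.1.2
    have hwlt : w < t1 := hwt1.lt_of_ne (by intro h; rw [h] at hw; exact absurd hw.2 (not_le.mpr hcon))
    have hIoc : ∀ u ∈ Set.Ioc w t1, S u ≤ 0 := by
      intro u hu
      by_contra hup
      push_neg at hup
      have huA : u ∈ A := ⟨⟨le_trans hw.1.1 hu.1.le, hu.2⟩, hup.le⟩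
      have := le_csSup hAcomp.bddAbove huA
      linarith [hu.1]
    have hIcc : ∀ u ∈ Set.Icc w t1, S u ≤ 0 := by
      intro u hu
      have hclos : Set.Icc w t1 ⊆ {x : ℝ | S x ≤ 0} := by
        rw [← closure_Ioc hwlt.ne]
        exact closure_minimal hIoc (isClosed_le hScont continuous_const)
      exact hclos hu
    have hSw : S w = 0 := le_antisymm (hIcc w ⟨le_rfl, hwlt.le⟩) hw.2
    have hconst := constant_of_has_deriv_right_zero (f := S) (a := w) (b := t1)
      hScont.continuousOn
      (fun u hu => by
        have hcl : clamp01 (S u) = 0 :=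
          clamp01_of_nonpos (hIcc u (Set.Ico_subset_Icc_self hu))
        have hval : -(mu * clamp01 (S u) * B (clamp01 (I u))) = 0 := by rw [hcl]; ring
        exact (hval ▸ (hSD u)).hasDerivWithinAt)
    have := hconst t1 (Set.right_mem_Icc.mpr hwlt.le)
    rw [hSw] at this
    linarith
  -- nonnegativity of I
  have hI_nonneg : ∀ t, 0 ≤ t → 0 ≤ I t := by
    intro t1 ht1
    by_contra hcon
    push_neg at hcon
    have ht1pos : 0 < t1 := by
      rcases ht1.lt_or_eq with h | h
      · exact h
      · exfalso; rw [← h, hI0] at hcon; exact absurd hi0.1 (not_le.mpr hcon)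
    set A := {u : ℝ | u ∈ Set.Icc 0 t1 ∧ 0 ≤ I u} with hA
    have hAclosed : IsClosed A := isClosed_Icc.inter (isClosed_le continuous_const hIcont)
    have hAcomp : IsCompact A :=
      isCompact_Icc.of_isClosed_subset hAclosed (fun u hu => hu.1)
    have hAne : A.Nonempty := ⟨0, ⟨le_rfl, ht1pos.le⟩, by rw [hI0]; exact hi0.1⟩
    set w := sSup A with hwdef
    have hw : w ∈ A := hAcomp.sSup_mem hAne
    have hwt1 : w ≤ t1 := hw.1.2
    have hwlt : w < t1 := hwt1.lt_of_ne (by intro h; rw [h] at hw; exact absurd hw.2 (not_le.mpr hcon))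
    have hIoo : ∀ u ∈ Set.Ioo w t1, I u ≤ 0 := by
      intro u hu
      by_contra hup
      push_neg at hup
      have huA : u ∈ A := ⟨⟨le_trans hw.1.1 hu.1.le, hu.2.le⟩, hup.le⟩
      have := le_csSup hAcomp.bddAbove huA
      linarith [hu.1]
    have hmono2 : MonotoneOn I (Set.Icc w t1) := by
      apply monotoneOn_of_deriv_nonneg (convex_Icc w t1) hIcont.continuousOn
      · intro u _
        exact (hID u).differentiableAt.differentiableWithinAt
      · intro u hu
        rw [interior_Icc] at hu
        rw [(hID u).deriv]
        have hcl : clamp01 (I u) = 0 := clamp01_of_nonpos (hIoo u hu)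
        rw [hcl]
        rw [hB0]
        have h1 := (clamp01_mem (S u)).1
        nlinarith
    have := hmono2 ⟨le_rfl, hwlt.le⟩ ⟨hwlt.le, le_rfl⟩ hwlt.le
    linarith [hw.2]
  -- S + I is antitone
  have hW_anti : Antitone (fun u => S u + I u) := by
    apply antitone_of_deriv_nonpos
    · exact fun u => ((hSD u).differentiableAt).add ((hID u).differentiableAt)
    · intro u
      rw [show (fun u => S u + I u) = S + I from rfl, ((hSD u).add (hID u)).deriv]
      have h1 := (clamp01_mem (I u)).1
      nlinarith [mul_nonneg hgam.le h1]
  have hsum_le : ∀ t, 0 ≤ t → S t + I t ≤ 1 := by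
    intro t ht
    have h : S t + I t ≤ S 0 + I 0 := hW_anti ht
    rw [hS0, hI0] at h
    have := hr0.1
    linarith
  have hclampS : ∀ t, 0 ≤ t → clamp01 (S t) = S t := by
    intro t ht
    exact clamp01_of_mem ⟨hS_nonneg t ht, by linarith [hsum_le t ht, hI_nonneg t ht]⟩
  have hclampI : ∀ t, 0 ≤ t → clamp01 (I t) = I t := by
    intro t ht
    exact clamp01_of_mem ⟨hI_nonneg t ht, by linarith [hsum_le t ht, hS_nonneg t ht]⟩
  refine ⟨S, I, fun t => 1 - S t - I t, ⟨hS0, hI0, by show 1 - S 0 - I 0 = r0; rw [hS0, hI0]; linarith⟩, ?_, ?_, ?_⟩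
  · intro t ht
    refine ⟨?_, ?_, ?_⟩
    · have h := hSD t
      rwa [hclampS t ht, hclampI t ht] at h
    · have h := hID t
      rwa [hclampS t ht, hclampI t ht] at h
    · have h := ((hasDerivAt_const t (1:ℝ)).sub (hSD t)).sub (hID t)
      rw [hclampS t ht, hclampI t ht] at h
      rw [show gam * I t = 0 - -(mu * S t * B (I t)) - (mu * S t * B (I t) - gam * I t) by ring]
      exact h
  · intro t ht
    refine ⟨hS_nonneg t ht, hI_nonneg t ht, ?_, ?_⟩
    · show 0 ≤ 1 - S t - I t
      linarith [hsum_le t ht]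
    · show S t + I t + (1 - S t - I t) = 1
      ring
  · intro s' i' r' hinit hode hbound t ht
    set q : ℝ → ℝ × ℝ := fun u => (s' u, i' u) with hq
    have hqd : ∀ u, 0 ≤ u → HasDerivAt q (sirF mu gam B (q u)) u := by
      intro u hu
      obtain ⟨hds, hdi, _⟩ := hode u hu
      obtain ⟨hs'0, hi'0, hr'0, hsum'⟩ := hbound u hu
      have hs'1 : s' u ≤ 1 := by linarith
      have hi'1 : i' u ≤ 1 := by linarith
      have e : sirF mu gam B (q u)
          = (-(mu * s' u * B (i' u)), mu * s' u * B (i' u) - gam * i' u) := by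
        simp only [sirF, hq]
        rw [clamp01_of_mem ⟨hs'0, hs'1⟩, clamp01_of_mem ⟨hi'0, hi'1⟩]
      rw [e]
      exact hds.prodMk hdi
    have hqc : ContinuousOn q (Set.Icc 0 t) :=
      fun u hu => ((hqd u hu.1).continuousAt).continuousWithinAt
    have hsolCont : Continuous sol := by
      have : Differentiable ℝ sol := fun u => (hsolD u).differentiableAt
      exact this.continuous
    have huniq := ODE_solution_unique (v := fun _ : ℝ => sirF mu gam B) (K := K)
      (fun _ => hK) (a := 0) (b := t)
      hqc (fun u hu => (hqd u hu.1).hasDerivWithinAt)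
      hsolCont.continuousOn (fun u _ => (hsolD u).hasDerivWithinAt)
      (by rw [hq]; simp only; rw [hinit.1, hinit.2.1, hsol0])
    have hqt := huniq (Set.right_mem_Icc.mpr ht)
    have h1 : s' t = S t := congrArg Prod.fst hqt
    have h2 : i' t = I t := congrArg Prod.snd hqt
    refine ⟨h1, h2, ?_⟩
    show r' t = 1 - S t - I t
    obtain ⟨_, _, _, hsum'⟩ := hbound t ht
    rw [h1, h2] at hsum'
    linarith
end

section
/- For the solution (sₜ,iₜ,rₜ) of the gathering SIR system, sₜ is non-increasing and rₜ is non-decreasing; moreover if s₀ ≤ γi₀/(μB(i₀)) then iₜ is decreasing for all t, while otherwise iₜ first increases to a maximum and then decreases. -/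
open MeasureTheory Set

set_option maxHeartbeats 1000000 in
theorem stmt15 (mu gam : ℝ) (hmu : 0 < mu) (hgam : 0 < gam)
    (B : ℝ → ℝ)
    (hLip : ∃ L : NNReal, LipschitzOnWith L B (Set.Icc 0 1))
    (hmono : StrictMonoOn B (Set.Icc 0 1))
    (hconc : ConcaveOn ℝ (Set.Icc 0 1) B)
    (hB0 : B 0 = 0)
    (s i r : ℝ → ℝ)
    (hs0 : 0 < s 0) (hi0 : 0 < i 0) (hr0 : 0 ≤ r 0)
    (hrange : ∀ t : ℝ, 0 ≤ t → 0 ≤ s t ∧ 0 ≤ i t ∧ 0 ≤ r t ∧ s t + i t + r t = 1)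
    (hds : ∀ t : ℝ, 0 ≤ t → HasDerivAt s (-(mu * s t * B (i t))) t)
    (hdi : ∀ t : ℝ, 0 ≤ t → HasDerivAt i (mu * s t * B (i t) - gam * i t) t)
    (hdr : ∀ t : ℝ, 0 ≤ t → HasDerivAt r (gam * i t) t) :
    AntitoneOn s (Set.Ici 0) ∧ MonotoneOn r (Set.Ici 0) ∧
      (s 0 ≤ gam * i 0 / (mu * B (i 0)) → StrictAntiOn i (Set.Ici 0)) ∧
      (gam * i 0 / (mu * B (i 0)) < s 0 →
        ∃ tm : ℝ, 0 < tm ∧ StrictMonoOn i (Set.Icc 0 tm) ∧ StrictAntiOn i (Set.Ici tm)) := by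
  -- basic range facts
  have hiIcc : ∀ t : ℝ, 0 ≤ t → i t ∈ Icc (0:ℝ) 1 := by
    intro t ht
    obtain ⟨h1, h2, h3, h4⟩ := hrange t ht
    exact ⟨h2, by linarith⟩
  have hrle1 : ∀ t : ℝ, 0 ≤ t → r t ≤ 1 := by
    intro t ht
    obtain ⟨h1, h2, h3, h4⟩ := hrange t ht
    linarith
  have h01 : (0:ℝ) ∈ Icc (0:ℝ) 1 := ⟨le_refl 0, zero_le_one⟩
  have h11 : (1:ℝ) ∈ Icc (0:ℝ) 1 := ⟨zero_le_one, le_refl 1⟩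
  have hBnn : ∀ t : ℝ, 0 ≤ t → 0 ≤ B (i t) := by
    intro t ht
    have := hmono.monotoneOn h01 (hiIcc t ht) (hrange t ht).2.1
    rwa [hB0] at this
  have hBle : ∀ t : ℝ, 0 ≤ t → B (i t) ≤ B 1 := by
    intro t ht
    exact hmono.monotoneOn (hiIcc t ht) h11 (hiIcc t ht).2
  -- continuity
  have hconts : ContinuousOn s (Ici 0) := fun t ht =>
    (hds t ht).continuousAt.continuousWithinAt
  have hconti : ContinuousOn i (Ici 0) := fun t ht =>
    (hdi t ht).continuousAt.continuousWithinAt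
  have hcontr : ContinuousOn r (Ici 0) := fun t ht =>
    (hdr t ht).continuousAt.continuousWithinAt
  -- positivity of i
  have hipos : ∀ t : ℝ, 0 ≤ t → 0 < i t := by
    intro t ht
    set f : ℝ → ℝ := fun u => i u * Real.exp (gam * u) with hf_def
    have hf' : ∀ u : ℝ, 0 ≤ u →
        HasDerivAt f (mu * s u * B (i u) * Real.exp (gam * u)) u := by
      intro u hu
      have he : HasDerivAt (fun x : ℝ => Real.exp (gam * x)) (Real.exp (gam * u) * gam) u := by
        have := ((hasDerivAt_id u).const_mul gam).exp
        simpa using this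
      have := (hdi u hu).mul he
      convert this using 1
      rfl
      rfl
      rfl
      ring
    have hmonoF : MonotoneOn f (Ici 0) := by
      apply monotoneOn_of_deriv_nonneg (convex_Ici 0)
      · exact fun u hu => (hf' u hu).continuousAt.continuousWithinAt
      · intro u hu
        rw [interior_Ici] at hu
        exact (hf' u (le_of_lt hu)).differentiableAt.differentiableWithinAt
      · intro u hu
        rw [interior_Ici] at hu
        rw [(hf' u (le_of_lt hu)).deriv]
        have h1 := (hrange u (le_of_lt hu)).1
        have h2 := hBnn u (le_of_lt hu)
        positivity
    have h0t : f 0 ≤ f t := hmonoF (self_mem_Ici) ht ht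
    have hf0 : f 0 = i 0 := by simp [hf_def]
    have hE : 0 < Real.exp (gam * t) := Real.exp_pos _
    rw [hf0] at h0t
    by_contra hc
    push_neg at hc
    have : f t ≤ 0 := mul_nonpos_of_nonpos_of_nonneg hc hE.le
    linarith
  have hBpos : ∀ t : ℝ, 0 ≤ t → 0 < B (i t) := by
    intro t ht
    have := hmono h01 (hiIcc t ht) (hipos t ht)
    rwa [hB0] at this
  -- positivity of s
  have hspos : ∀ t : ℝ, 0 ≤ t → 0 < s t := by
    intro t ht
    set f : ℝ → ℝ := fun u => s u * Real.exp (mu * B 1 * u) with hf_def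
    have hf' : ∀ u : ℝ, 0 ≤ u →
        HasDerivAt f (mu * s u * (B 1 - B (i u)) * Real.exp (mu * B 1 * u)) u := by
      intro u hu
      have he : HasDerivAt (fun x : ℝ => Real.exp (mu * B 1 * x))
          (Real.exp (mu * B 1 * u) * (mu * B 1)) u := by
        have := ((hasDerivAt_id u).const_mul (mu * B 1)).exp
        simpa using this
      have := (hds u hu).mul he
      convert this using 1
      rfl
      rfl
      rfl
      ring
    have hmonoF : MonotoneOn f (Ici 0) := by
      apply monotoneOn_of_deriv_nonneg (convex_Ici 0)
      · exact fun u hu => (hf' u hu).continuousAt.continuousWithinAt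
      · intro u hu
        rw [interior_Ici] at hu
        exact (hf' u (le_of_lt hu)).differentiableAt.differentiableWithinAt
      · intro u hu
        rw [interior_Ici] at hu
        rw [(hf' u (le_of_lt hu)).deriv]
        have h1 := (hrange u (le_of_lt hu)).1
        have h2 := hBle u (le_of_lt hu)
        have h3 : (0:ℝ) ≤ B 1 - B (i u) := by linarith
        positivity
    have h0t : f 0 ≤ f t := hmonoF (self_mem_Ici) ht ht
    have hf0 : f 0 = s 0 := by simp [hf_def]
    have hE : 0 < Real.exp (mu * B 1 * t) := Real.exp_pos _
    rw [hf0] at h0t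
    by_contra hc
    push_neg at hc
    have : f t ≤ 0 := mul_nonpos_of_nonpos_of_nonneg hc hE.le
    linarith
  -- s strictly decreasing
  have hsanti : StrictAntiOn s (Ici 0) := by
    apply strictAntiOn_of_deriv_neg (convex_Ici 0) hconts
    intro x hx
    rw [interior_Ici] at hx
    rw [(hds x (le_of_lt hx)).deriv]
    have h1 := hspos x (le_of_lt hx)
    have h2 := hBpos x (le_of_lt hx)
    have h3 := mul_pos (mul_pos hmu h1) h2
    linarith
  -- r monotone
  have hrmono : MonotoneOn r (Ici 0) := by
    apply monotoneOn_of_deriv_nonneg (convex_Ici 0) hcontr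
    · intro x hx
      rw [interior_Ici] at hx
      exact (hdr x (le_of_lt hx)).differentiableAt.differentiableWithinAt
    · intro x hx
      rw [interior_Ici] at hx
      rw [(hdr x (le_of_lt hx)).deriv]
      have := (hrange x (le_of_lt hx)).2.1
      positivity
  -- the threshold function and the sign function w
  set th : ℝ → ℝ := fun x => gam * x / (mu * B x) with hth_def
  set w : ℝ → ℝ := fun t => s t - th (i t) with hw_def
  have hweq : ∀ t : ℝ, w t = s t - gam * i t / (mu * B (i t)) := fun t => rfl
  -- monotonicity of th
  have hthmono : ∀ x y : ℝ, 0 < x → x ≤ y → y ≤ 1 → th x ≤ th y := by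
    intro x y hx hxy hy1
    have hy : 0 < y := lt_of_lt_of_le hx hxy
    have hBx : 0 < B x := by
      have := hmono h01 (⟨hx.le, hxy.trans hy1⟩ : x ∈ Icc (0:ℝ) 1) hx
      rwa [hB0] at this
    have hBy : 0 < B y := by
      have := hmono h01 (⟨hy.le, hy1⟩ : y ∈ Icc (0:ℝ) 1) hy
      rwa [hB0] at this
    have key : x * B y ≤ y * B x := by
      have ha' : (0:ℝ) ≤ 1 - x / y := by
        rw [sub_nonneg]
        exact div_le_one_of_le₀ hxy hy.le
      have hb' : (0:ℝ) ≤ x / y := by positivity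
      have hab1 : (1 - x / y) + (x / y) = 1 := by ring
      have hc := hconc.2 h01 (⟨hy.le, hy1⟩ : y ∈ Icc (0:ℝ) 1) ha' hb' hab1
      have hxy' : (1 - x / y) • (0:ℝ) + (x / y) • y = x := by
        simp only [smul_eq_mul, mul_zero, zero_add]
        field_simp
      rw [hxy'] at hc
      have h5 : (x / y) * B y ≤ B x := by
        simpa [hB0, smul_eq_mul] using hc
      have h6 : ((x / y) * B y) * y ≤ B x * y := by nlinarith
      have h7 : ((x / y) * B y) * y = x * B y := by
        first
        | (field_simp; ring)
        | field_simp
      nlinarith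
    simp only [hth_def]
    rw [div_le_div_iff₀ (by positivity) (by positivity)]
    nlinarith [mul_le_mul_of_nonneg_left key (le_of_lt (mul_pos hgam hmu))]
  -- derivative of i in terms of w
  have hderiv_i : ∀ t : ℝ, 0 ≤ t → HasDerivAt i (mu * B (i t) * w t) t := by
    intro t ht
    have heq : mu * B (i t) * w t = mu * s t * B (i t) - gam * i t := by
      rw [hweq]
      have hB := hBpos t ht
      field_simp
    rw [heq]
    exact hdi t ht
  -- continuity of w on Ici 0
  have hwcont : ContinuousOn w (Ici 0) := by
    obtain ⟨L, hL⟩ := hLip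
    have hBicont : ContinuousOn (fun t => B (i t)) (Ici 0) := by
      apply hL.continuousOn.comp hconti
      intro t ht
      exact hiIcc t ht
    apply hconts.sub
    apply ContinuousOn.div
    · exact (continuousOn_const.mul hconti)
    · exact continuousOn_const.mul hBicont
    · intro t ht
      have := hBpos t ht
      positivity
  -- L3 : strict decrease of w on intervals where w ≥ 0
  have L3 : ∀ c d : ℝ, 0 ≤ c → c < d → (∀ t ∈ Icc c d, 0 ≤ w t) → w d < w c := by
    intro c d hc hcd hw
    have hd : (0:ℝ) ≤ d := hc.trans hcd.le
    have himono : MonotoneOn i (Icc c d) := by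
      apply monotoneOn_of_deriv_nonneg (convex_Icc c d)
        (hconti.mono (Icc_subset_Ici_self.trans (Ici_subset_Ici.mpr hc)))
      · intro x hx
        rw [interior_Icc] at hx
        exact (hderiv_i x (hc.trans hx.1.le)).differentiableAt.differentiableWithinAt
      · intro x hx
        rw [interior_Icc] at hx
        have hx0 : (0:ℝ) ≤ x := hc.trans hx.1.le
        rw [(hderiv_i x hx0).deriv]
        have h1 := hBpos x hx0
        have h2 := hw x ⟨hx.1.le, hx.2.le⟩
        positivity
    have h1 : i c ≤ i d := himono ⟨le_refl c, hcd.le⟩ ⟨hcd.le, le_refl d⟩ hcd.le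
    have h2 : th (i c) ≤ th (i d) := hthmono _ _ (hipos c hc) h1 (hiIcc d hd).2
    have h3 : s d < s c := hsanti hc hd hcd
    simp only [hw_def]
    linarith
  -- Claim B : w ≤ 0 is forward invariant
  have claimB : ∀ a b : ℝ, 0 ≤ a → a ≤ b → w a ≤ 0 → w b ≤ 0 := by
    intro a b ha hab hwa
    by_contra hwb
    push_neg at hwb
    have hab' : a < b := lt_of_le_of_ne hab (by rintro rfl; linarith)
    set T := {t ∈ Icc a b | w t ≤ 0} with hT_def
    have hTsub : T ⊆ Icc a b := fun t ht => ht.1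
    have hTne : T.Nonempty := ⟨a, ⟨le_refl a, hab'.le⟩, hwa⟩
    have hTclosed : IsClosed T := by
      have hTeq : T = Icc a b ∩ w ⁻¹' Iic 0 := by
        ext t
        simp [hT_def]
      rw [hTeq]
      exact ContinuousOn.preimage_isClosed_of_isClosed
        (hwcont.mono (Icc_subset_Ici_self.trans (Ici_subset_Ici.mpr ha)))
        isClosed_Icc isClosed_Iic
    have hTcomp : IsCompact T := isCompact_Icc.of_isClosed_subset hTclosed hTsub
    set c := sSup T with hc_def
    have hcT : c ∈ T := hTcomp.sSup_mem hTne
    obtain ⟨⟨hac, hcb⟩, hwc⟩ := hcT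
    have hc0 : (0:ℝ) ≤ c := ha.trans hac
    have hcb' : c < b := lt_of_le_of_ne hcb (by intro heq; rw [heq] at hwc; linarith)
    have hgt : ∀ t, c < t → t ≤ b → 0 < w t := by
      intro t hct htb
      by_contra h
      push_neg at h
      have htT : t ∈ T := ⟨⟨hac.trans hct.le, htb⟩, h⟩
      have := le_csSup hTcomp.bddAbove htT
      rw [← hc_def] at this
      linarith
    have hwc0 : 0 ≤ w c := by
      have htend : Filter.Tendsto w (nhdsWithin c (Ioi c)) (nhds (w c)) := by
        have h1 : ContinuousWithinAt w (Ici 0) c := hwcont c hc0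
        exact h1.mono_left (nhdsWithin_mono c (fun x hx => hc0.trans (le_of_lt hx)))
      apply ge_of_tendsto htend
      filter_upwards [Ioo_mem_nhdsGT_of_mem (⟨le_refl c, hcb'⟩ : c ∈ Ico c b)] with t ht
      exact (hgt t ht.1 ht.2.le).le
    have hnonneg : ∀ t ∈ Icc c b, 0 ≤ w t := by
      rintro t ⟨hct, htb⟩
      rcases eq_or_lt_of_le hct with rfl | h
      · exact hwc0
      · exact (hgt t h htb).le
    have := L3 c b hc0 hcb' hnonneg
    linarith
  -- L4 : derivative of w at points where w = 0
  have L4 : ∀ d : ℝ, 0 < d → w d = 0 → HasDerivAt w (-(mu * s d * B (i d))) d := by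
    intro d hd hwd
    have hd0 : (0:ℝ) ≤ d := hd.le
    have hy : 0 < i d := hipos d hd0
    have hy1 : i d ≤ 1 := (hiIcc d hd0).2
    obtain ⟨L, hL⟩ := hLip
    have hhalfmem : i d / 2 ∈ Icc (0:ℝ) 1 := ⟨by linarith, by linarith⟩
    have hBhalf : 0 < B (i d / 2) := by
      have := hmono h01 hhalfmem (by linarith)
      rwa [hB0] at this
    have hB1nn : 0 ≤ B 1 := by
      have := hmono.monotoneOn h01 h11 zero_le_one
      rwa [hB0] at this
    set K := gam * (B 1 + L) / (mu * (B (i d / 2)) ^ 2) with hK_def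
    -- derivative of i at d is 0
    have hsd : s d = gam * i d / (mu * B (i d)) := by
      have := hweq d
      rw [hwd] at this
      linarith
    have hid' : mu * s d * B (i d) - gam * i d = 0 := by
      rw [hsd]
      have hB := hBpos d hd0
      have hB' : B (i d) ≠ 0 := ne_of_gt hB
      have hmu' : mu ≠ 0 := ne_of_gt hmu
      first
      | (field_simp; ring)
      | field_simp
    have hderiv0 : HasDerivAt i 0 d := hid' ▸ hdi d hd0
    -- pointwise Lipschitz bound on th near i d
    have hbound : ∀ a ∈ Icc (0:ℝ) 1, i d / 2 ≤ a → |th a - th (i d)| ≤ K * |a - i d| := by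
      intro a ha hha
      set b := i d with hb_def
      have hBa : B (i d / 2) ≤ B a := hmono.monotoneOn hhalfmem ha hha
      have hBb : B (i d / 2) ≤ B b := hmono.monotoneOn hhalfmem ⟨hy.le, hy1⟩ (by linarith)
      have hBapos : 0 < B a := lt_of_lt_of_le hBhalf hBa
      have hBbpos : 0 < B b := lt_of_lt_of_le hBhalf hBb
      have hBale : B a ≤ B 1 := hmono.monotoneOn ha h11 ha.2
      have hBble : B b ≤ B 1 := hmono.monotoneOn ⟨hy.le, hy1⟩ h11 hy1
      have heq : th a - th b = gam * (a * B b - b * B a) / (mu * (B a * B b)) := by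
        simp only [hth_def]
        field_simp
      have hLip' : |B b - B a| ≤ (L : ℝ) * |b - a| := by
        have := hL.dist_le_mul b ⟨hy.le, hy1⟩ a ha
        simpa [Real.dist_eq] using this
      have hnum : |a * B b - b * B a| ≤ (B 1 + L) * |a - b| := by
        have h1 : a * B b - b * B a = (a - b) * B b + b * (B b - B a) := by ring
        rw [h1]
        calc |(a - b) * B b + b * (B b - B a)|
            ≤ |(a - b) * B b| + |b * (B b - B a)| := abs_add_le _ _
          _ = |a - b| * |B b| + |b| * |B b - B a| := by rw [abs_mul, abs_mul]
          _ ≤ |a - b| * B 1 + 1 * ((L : ℝ) * |b - a|) := by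
              apply add_le_add
              · apply mul_le_mul_of_nonneg_left _ (abs_nonneg _)
                rw [abs_of_pos hBbpos]; exact hBble
              · apply mul_le_mul
                · rw [abs_of_nonneg hy.le]; exact hy1
                · exact hLip'
                · exact abs_nonneg _
                · exact zero_le_one
          _ = (B 1 + L) * |a - b| := by rw [abs_sub_comm b a]; ring
      rw [heq, abs_div, abs_mul, abs_of_pos hgam,
        abs_of_pos (by positivity : (0:ℝ) < mu * (B a * B b))]
      have hden : mu * (B (i d / 2)) ^ 2 ≤ mu * (B a * B b) := by
        have hh : (B (i d / 2)) ^ 2 ≤ B a * B b := by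
          nlinarith [mul_le_mul hBa hBb hBhalf.le (le_of_lt hBapos)]
        exact mul_le_mul_of_nonneg_left hh hmu.le
      have hnum' : gam * |a * B b - b * B a| ≤ gam * ((B 1 + L) * |a - b|) :=
        mul_le_mul_of_nonneg_left hnum hgam.le
      calc gam * |a * B b - b * B a| / (mu * (B a * B b))
          ≤ gam * ((B 1 + L) * |a - b|) / (mu * (B (i d / 2)) ^ 2) := by
            apply div_le_div₀ (by positivity) hnum' (by positivity) hden
        _ = K * |a - b| := by
            rw [hK_def, ← hb_def]
            first
            | (field_simp; ring)
            | field_simp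
    -- th ∘ i has derivative 0 at d
    have hio : (fun t => i t - i d) =o[nhds d] fun t => t - d := by
      have := hasDerivAt_iff_isLittleO.mp hderiv0
      simpa using this
    have hBO : (fun t => th (i t) - th (i d)) =O[nhds d] (fun t => i t - i d) := by
      apply Asymptotics.IsBigO.of_bound K
      have hcontid : ContinuousAt i d := hderiv0.continuousAt
      have hev1 : ∀ᶠ t in nhds d, i d / 2 < i t := by
        have h5 : ∀ᶠ x in nhds (i d), i d / 2 < x := eventually_gt_nhds (by linarith)
        exact hcontid.eventually h5
      have hev2 : ∀ᶠ t in nhds d, 0 < t := eventually_gt_nhds hd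
      filter_upwards [hev1, hev2] with t h1 h2
      rw [Real.norm_eq_abs, Real.norm_eq_abs]
      exact hbound (i t) (hiIcc t h2.le) h1.le
    have hcomp : HasDerivAt (fun t => th (i t)) 0 d := by
      have h9 := hBO.trans_isLittleO hio
      rw [hasDerivAt_iff_isLittleO]
      simp only [smul_zero, sub_zero]
      exact h9
    have h10 := (hds d hd0).sub hcomp
    rw [sub_zero] at h10
    exact h10
  -- Claim D : strict forward invariance
  have claimD : ∀ a b : ℝ, 0 ≤ a → a < b → w a ≤ 0 → w b < 0 := by
    intro a b ha hab hwa
    have hwb := claimB a b ha hab.le hwa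
    rcases lt_or_eq_of_le hwb with h | h
    · exact h
    exfalso
    have hb : 0 < b := lt_of_le_of_lt ha hab
    have hder := L4 b hb h
    have hvneg : -(mu * s b * B (i b)) < 0 := by
      have h1 := hspos b hb.le
      have h2 := hBpos b hb.le
      have h3 := mul_pos (mul_pos hmu h1) h2
      linarith
    have hslope := hasDerivAt_iff_tendsto_slope.mp hder
    have hev : ∀ᶠ t in nhdsWithin b {b}ᶜ, slope w b t < 0 :=
      hslope.eventually (eventually_lt_nhds hvneg)
    have hev' : ∀ᶠ t in nhdsWithin b (Iio b), slope w b t < 0 :=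
      hev.filter_mono (nhdsWithin_mono b (fun x hx => ne_of_lt hx))
    have hev2 : ∀ᶠ t in nhdsWithin b (Iio b), t ∈ Ioo a b :=
      Filter.eventually_of_mem (Ioo_mem_nhdsLT_of_mem ⟨hab, le_refl b⟩) (fun x hx => hx)
    obtain ⟨t, hslt, htab⟩ := (hev'.and hev2).exists
    have hwt : 0 < w t := by
      rw [slope_def_field] at hslt
      rw [h] at hslt
      have htb' : t - b < 0 := by
        have := htab.2
        linarith
      rcases div_neg_iff.mp hslt with ⟨h1, h2⟩ | ⟨h1, h2⟩
      · linarith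
      · linarith
    have := claimB a t ha htab.1.le hwa
    linarith
  refine ⟨hsanti.antitoneOn, hrmono, ?_, ?_⟩
  · -- case s 0 ≤ threshold
    intro hcase
    have hw0 : w 0 ≤ 0 := by
      rw [hweq]
      linarith
    apply strictAntiOn_of_deriv_neg (convex_Ici 0) hconti
    intro x hx
    rw [interior_Ici] at hx
    rw [(hderiv_i x hx.le).deriv]
    have h1 := hBpos x hx.le
    have h2 := claimD 0 x (le_refl 0) hx hw0
    exact mul_neg_of_pos_of_neg (mul_pos hmu h1) h2
  · -- case threshold < s 0
    intro hcase
    have hw0 : 0 < w 0 := by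
      rw [hweq]
      linarith
    -- there is a time where w is nonpositive
    have hexneg : ∃ t : ℝ, 0 ≤ t ∧ w t ≤ 0 := by
      by_contra hall
      push_neg at hall
      -- i is monotone, so r grows linearly, contradiction
      have himono : MonotoneOn i (Ici 0) := by
        apply monotoneOn_of_deriv_nonneg (convex_Ici 0) hconti
        · intro x hx
          rw [interior_Ici] at hx
          exact (hderiv_i x hx.le).differentiableAt.differentiableWithinAt
        · intro x hx
          rw [interior_Ici] at hx
          rw [(hderiv_i x hx.le).deriv]
          have h1 := hBpos x hx.le
          have h2 := (hall x hx.le).le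
          positivity
      set T : ℝ := 2 / (gam * i 0) with hT_def
      have hTpos : 0 < T := by positivity
      set q : ℝ → ℝ := fun t => r t - gam * i 0 * t with hq_def
      have hq' : ∀ t : ℝ, 0 ≤ t → HasDerivAt q (gam * i t - gam * i 0) t := by
        intro t ht
        have h2 : HasDerivAt (fun x : ℝ => gam * i 0 * x) (gam * i 0) t := by
          simpa using (hasDerivAt_id t).const_mul (gam * i 0)
        exact (hdr t ht).sub h2
      have hqmono : MonotoneOn q (Ici 0) := by
        apply monotoneOn_of_deriv_nonneg (convex_Ici 0)
        · exact fun t ht => (hq' t ht).continuousAt.continuousWithinAt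
        · intro x hx
          rw [interior_Ici] at hx
          exact (hq' x hx.le).differentiableAt.differentiableWithinAt
        · intro x hx
          rw [interior_Ici] at hx
          rw [(hq' x hx.le).deriv]
          have := himono (self_mem_Ici : (0:ℝ) ∈ Ici 0) (Set.mem_Ioi.mp hx).le (Set.mem_Ioi.mp hx).le
          nlinarith
      have h0T : q 0 ≤ q T := hqmono self_mem_Ici hTpos.le hTpos.le
      have hq0 : q 0 = r 0 := by simp [hq_def]
      have hqT : q T = r T - 2 := by
        rw [hq_def]
        simp only
        rw [hT_def]
        field_simp
      rw [hq0, hqT] at h0T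
      have := hrle1 T hTpos.le
      linarith
    -- define tm
    set S := {t : ℝ | 0 ≤ t ∧ w t ≤ 0} with hS_def
    have hSne : S.Nonempty := by
      obtain ⟨t, ht1, ht2⟩ := hexneg
      exact ⟨t, ht1, ht2⟩
    have hSclosed : IsClosed S := by
      have hSeq : S = Ici 0 ∩ w ⁻¹' Iic 0 := by
        ext t
        simp [hS_def]
      rw [hSeq]
      exact hwcont.preimage_isClosed_of_isClosed isClosed_Ici isClosed_Iic
    have hSbdd : BddBelow S := ⟨0, fun x hx => hx.1⟩
    set tm := sInf S with htm_def
    have htmS : tm ∈ S := hSclosed.csInf_mem hSne hSbdd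
    obtain ⟨htm0, hwtm⟩ := htmS
    have htmpos : 0 < tm := by
      rcases eq_or_lt_of_le htm0 with hh | hh
      · exfalso
        rw [← hh] at hwtm
        linarith
      · exact hh
    have hwpos : ∀ t : ℝ, 0 ≤ t → t < tm → 0 < w t := by
      intro t ht1 ht2
      by_contra hcc
      push_neg at hcc
      have : tm ≤ t := csInf_le hSbdd ⟨ht1, hcc⟩
      linarith
    refine ⟨tm, htmpos, ?_, ?_⟩
    · apply strictMonoOn_of_deriv_pos (convex_Icc 0 tm)
        (hconti.mono Icc_subset_Ici_self)
      intro x hx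
      rw [interior_Icc] at hx
      rw [(hderiv_i x hx.1.le).deriv]
      have h1 := hBpos x hx.1.le
      have h2 := hwpos x hx.1.le hx.2
      positivity
    · apply strictAntiOn_of_deriv_neg (convex_Ici tm)
        (hconti.mono (Ici_subset_Ici.mpr htm0))
      intro x hx
      rw [interior_Ici] at hx
      have hx0 : (0:ℝ) ≤ x := htm0.trans hx.le
      rw [(hderiv_i x hx0).deriv]
      have h1 := hBpos x hx0
      have h2 := claimD tm x htm0 hx hwtm
      exact mul_neg_of_pos_of_neg (mul_pos hmu h1) h2
end

section
/- Let (sₜ,iₜ,rₜ) solve s' = -μsB(i), i' = μsB(i)-γi, r' = γi and (ŝₜ,îₜ,r̂ₜ) solve the classic SIR system ŝ' = -βŝî, î' = βŝî-γî, r̂' = γî with β = μB'(0), both from the same initial condition (s₀,i₀,r₀) with s₀,i₀>0. Then sₜ ≥ ŝₜ for all t ≥ 0. -/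
open MeasureTheory Set

/-- If `f` has nonnegative derivative on `(a,b)` then `f a ≤ f b`. -/
theorem helper_mono (a b : ℝ) (hab : a ≤ b) (f f' : ℝ → ℝ)
    (hf : ∀ t ∈ Set.Icc a b, HasDerivAt f (f' t) t)
    (h0 : ∀ t ∈ Set.Ioo a b, 0 ≤ f' t) : f a ≤ f b := by
  have hmono := monotoneOn_of_deriv_nonneg (convex_Icc a b)
    (fun t ht => (hf t ht).continuousAt.continuousWithinAt)
    (fun t ht => by
      rw [interior_Icc] at ht
      exact (hf t (Set.Ioo_subset_Icc_self ht)).differentiableAt.differentiableWithinAt)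
    (fun t ht => by
      rw [interior_Icc] at ht
      rw [(hf t (Set.Ioo_subset_Icc_self ht)).deriv]
      exact h0 t ht)
  exact hmono (Set.left_mem_Icc.2 hab) (Set.right_mem_Icc.2 hab) hab

/-- Quasi-positivity / Gronwall-type invariance: if `u 0 = 0` and whenever `u t < 0`
we have `u' t + K * u t ≥ 0`, then `u` stays nonnegative on `[0,∞)`. -/
theorem helper_nonneg (K : ℝ) (u u' : ℝ → ℝ)
    (hu : ∀ t : ℝ, 0 ≤ t → HasDerivAt u (u' t) t)
    (h0 : u 0 = 0)
    (hK : ∀ t : ℝ, 0 ≤ t → u t < 0 → 0 ≤ u' t + K * u t) :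
    ∀ t : ℝ, 0 ≤ t → 0 ≤ u t := by
  intro T hT
  by_contra hneg
  push_neg at hneg
  set S : Set ℝ := Icc 0 T ∩ u ⁻¹' Ici 0 with hS
  have hSc : IsClosed S := by
    apply ContinuousOn.preimage_isClosed_of_isClosed
      (fun t ht => (hu t ht.1).continuousAt.continuousWithinAt) isClosed_Icc isClosed_Ici
  have hS0 : (0:ℝ) ∈ S := ⟨⟨le_refl _, hT⟩, by simp [h0]⟩
  have hSb : BddAbove S := BddAbove.mono (Set.inter_subset_left) (bddAbove_Icc)
  set c := sSup S with hc
  have hcS : c ∈ S := hSc.csSup_mem ⟨0, hS0⟩ hSb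
  have hc0 : 0 ≤ c := hcS.1.1
  have hcT : c ≤ T := hcS.1.2
  have hcu : 0 ≤ u c := hcS.2
  have hcT' : c < T := lt_of_le_of_ne hcT (fun h => (not_le.2 hneg) (h ▸ hcu))
  have hlt : ∀ t ∈ Ioo c T, u t < 0 := by
    intro t ht
    by_contra h
    push_neg at h
    have : t ∈ S := ⟨⟨le_trans hc0 ht.1.le, ht.2.le⟩, h⟩
    exact absurd (le_csSup hSb this) (not_le.2 ht.1)
  have key : u c * Real.exp (K * c) ≤ u T * Real.exp (K * T) := by
    apply helper_mono c T hcT (fun t => u t * Real.exp (K * t))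
      (fun t => (u' t + K * u t) * Real.exp (K * t))
    · intro t ht
      have ht0 : 0 ≤ t := le_trans hc0 ht.1
      have h1 : HasDerivAt (fun x => Real.exp (K * x)) (Real.exp (K * t) * (K * 1)) t :=
        ((hasDerivAt_id t).const_mul K).exp
      have := (hu t ht0).mul h1
      refine this.congr_deriv ?_
      ring
    · intro t ht
      have ht0 : 0 ≤ t := le_trans hc0 ht.1.le
      have := hK t ht0 (hlt t ht)
      positivity
  have h1 : 0 ≤ u c * Real.exp (K * c) := mul_nonneg hcu (Real.exp_pos _).le
  have h2 : u T * Real.exp (K * T) < 0 :=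
    mul_neg_of_neg_of_pos hneg (Real.exp_pos _)
  linarith

theorem stmt16 (mu gam d : ℝ) (hmu : 0 < mu) (hgam : 0 < gam)
    (B : ℝ → ℝ)
    (hd : HasDerivAt B d 0)
    (hmono : StrictMonoOn B (Set.Icc 0 1))
    (hconc : ConcaveOn ℝ (Set.Icc 0 1) B)
    (hB0 : B 0 = 0)
    (hle : ∀ x ∈ Set.Icc (0 : ℝ) 1, B x ≤ d * x)
    (s0 i0 r0 : ℝ) (hs0 : 0 < s0) (hi0 : 0 < i0) (hr0 : 0 ≤ r0) (hsum0 : s0 + i0 + r0 = 1)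
    (s i r : ℝ → ℝ) (sh ih rh : ℝ → ℝ)
    (hinit : s 0 = s0 ∧ i 0 = i0 ∧ r 0 = r0)
    (hinith : sh 0 = s0 ∧ ih 0 = i0 ∧ rh 0 = r0)
    (hrange : ∀ t : ℝ, 0 ≤ t → 0 ≤ s t ∧ 0 ≤ i t ∧ 0 ≤ r t ∧ s t + i t + r t = 1)
    (hrangeh : ∀ t : ℝ, 0 ≤ t → 0 ≤ sh t ∧ 0 ≤ ih t ∧ 0 ≤ rh t ∧ sh t + ih t + rh t = 1)
    (hds : ∀ t : ℝ, 0 ≤ t → HasDerivAt s (-(mu * s t * B (i t))) t)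
    (hdi : ∀ t : ℝ, 0 ≤ t → HasDerivAt i (mu * s t * B (i t) - gam * i t) t)
    (hdr : ∀ t : ℝ, 0 ≤ t → HasDerivAt r (gam * i t) t)
    (hdsh : ∀ t : ℝ, 0 ≤ t → HasDerivAt sh (-((mu * d) * sh t * ih t)) t)
    (hdih : ∀ t : ℝ, 0 ≤ t → HasDerivAt ih ((mu * d) * sh t * ih t - gam * ih t) t)
    (hdrh : ∀ t : ℝ, 0 ≤ t → HasDerivAt rh (gam * ih t) t) :
    ∀ t : ℝ, 0 ≤ t → sh t ≤ s t := by
  obtain ⟨hins, hini, hinr⟩ := hinit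
  obtain ⟨hinsh, hinih, hinrh⟩ := hinith
  -- d > 0
  have hdpos : 0 < d := by
    have h1 : B 0 < B 1 := hmono ⟨le_refl 0, zero_le_one⟩ ⟨zero_le_one, le_refl 1⟩ zero_lt_one
    have h2 := hle 1 ⟨zero_le_one, le_refl 1⟩
    rw [hB0] at h1
    linarith
  obtain ⟨c, hcdef⟩ : ∃ c : ℝ, c = mu * d / gam := ⟨_, rfl⟩
  have hcpos : 0 < c := by rw [hcdef]; positivity
  have hcg : c * gam = mu * d := by rw [hcdef]; field_simp
  -- Step A : s t ≥ s0 * exp (-(c * (r t - r0)))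
  have stepA : ∀ t : ℝ, 0 ≤ t → s0 * Real.exp (-(c * (r t - r0))) ≤ s t := by
    intro t ht
    have key : s 0 * Real.exp (c * (r 0 - r0)) ≤ s t * Real.exp (c * (r t - r0)) := by
      apply helper_mono 0 t ht (fun τ => s τ * Real.exp (c * (r τ - r0)))
        (fun τ => (-(mu * s τ * B (i τ))) * Real.exp (c * (r τ - r0))
          + s τ * (Real.exp (c * (r τ - r0)) * (c * (gam * i τ))))
      · intro τ hτ
        exact (hds τ hτ.1).mul (((hdr τ hτ.1).sub_const r0).const_mul c).exp
      · intro τ hτ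
        obtain ⟨hsτ, hiτ, hrτ, hsum⟩ := hrange τ hτ.1.le
        have hi1 : i τ ≤ 1 := by linarith
        have hBi : B (i τ) ≤ d * i τ := hle (i τ) ⟨hiτ, hi1⟩
        have he : 0 < Real.exp (c * (r τ - r0)) := Real.exp_pos _
        have hmain : 0 ≤ Real.exp (c * (r τ - r0)) * (mu * s τ * (d * i τ - B (i τ))) := by
          have : 0 ≤ mu * s τ * (d * i τ - B (i τ)) :=
            mul_nonneg (mul_nonneg hmu.le hsτ) (by linarith)
          positivity
        calc (0:ℝ) ≤ Real.exp (c * (r τ - r0)) * (mu * s τ * (d * i τ - B (i τ))) := hmain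
          _ = (-(mu * s τ * B (i τ))) * Real.exp (c * (r τ - r0))
              + s τ * (Real.exp (c * (r τ - r0)) * (c * (gam * i τ))) := by
            linear_combination (-(s τ * i τ * Real.exp (c * (r τ - r0)))) * hcg
    rw [hins, hinr] at key
    simp only [sub_self, mul_zero, Real.exp_zero, mul_one] at key
    rw [Real.exp_neg, ← div_eq_mul_inv, div_le_iff₀ (Real.exp_pos _)]
    exact key
  -- Step B : sh t = s0 * exp (-(c * (rh t - r0)))
  have stepB : ∀ t : ℝ, 0 ≤ t → sh t = s0 * Real.exp (-(c * (rh t - r0))) := by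
    intro t ht
    have hderiv : ∀ τ ∈ Set.Icc 0 t,
        HasDerivAt (fun τ => sh τ * Real.exp (c * (rh τ - r0))) ((fun _ => (0:ℝ)) τ) τ := by
      intro τ hτ
      have := (hdsh τ hτ.1).mul (((hdrh τ hτ.1).sub_const r0).const_mul c).exp
      refine this.congr_deriv ?_
      symm
      linear_combination (-(sh τ * ih τ * Real.exp (c * (rh τ - r0)))) * hcg
    have h1 : sh 0 * Real.exp (c * (rh 0 - r0)) ≤ sh t * Real.exp (c * (rh t - r0)) :=
      helper_mono 0 t ht _ _ hderiv (fun τ _ => le_refl 0)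
    have h2 : sh t * Real.exp (c * (rh t - r0)) ≤ sh 0 * Real.exp (c * (rh 0 - r0)) := by
      have h := helper_mono 0 t ht (fun τ => -(sh τ * Real.exp (c * (rh τ - r0))))
        (fun _ => (0:ℝ)) (fun τ hτ => (hderiv τ hτ).neg.congr_deriv neg_zero) (fun τ _ => le_refl 0)
      linarith
    have heq : sh t * Real.exp (c * (rh t - r0)) = s0 := by
      rw [hinsh, hinrh] at h1 h2
      simp only [sub_self, mul_zero, Real.exp_zero, mul_one] at h1 h2
      linarith
    rw [Real.exp_neg, ← div_eq_mul_inv, eq_div_iff (Real.exp_pos _).ne']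
    exact heq
  -- Step C : r t ≤ rh t
  have stepC : ∀ t : ℝ, 0 ≤ t → r t ≤ rh t := by
    have := helper_nonneg (gam * (1 - c)) (fun t => rh t - r t) (fun t => gam * ih t - gam * i t)
      (fun t ht => (hdrh t ht).sub (hdr t ht))
      (by simp [hinr, hinrh])
      (by
        intro t ht hult
        obtain ⟨hsτ, hiτ, hrτ, hsum⟩ := hrange t ht
        obtain ⟨hshτ, hihτ, hrhτ, hsumh⟩ := hrangeh t ht
        have hih : ih t = 1 - sh t - rh t := by linarith
        have hi : i t = 1 - s t - r t := by linarith
        have hsh1 : sh t ≤ 1 := by linarith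
        have hA := stepA t ht
        have hBt := stepB t ht
        -- sh t * exp(c * (rh t - r t)) ≤ s t
        have hst : sh t * Real.exp (c * (rh t - r t)) ≤ s t := by
          rw [hBt, mul_assoc, ← Real.exp_add]
          have hxy : -(c * (rh t - r0)) + c * (rh t - r t) = -(c * (r t - r0)) := by ring
          rw [hxy]
          exact hA
        have h2 : c * (rh t - r t) + 1 ≤ Real.exp (c * (rh t - r t)) :=
          Real.add_one_le_exp _
        have h3 : Real.exp (c * (rh t - r t)) ≤ 1 := by
          rw [Real.exp_le_one_iff]
          nlinarith
        have hkey : 0 ≤ s t - sh t - c * (rh t - r t) := by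
          nlinarith [mul_nonneg (by linarith : (0:ℝ) ≤ 1 - sh t)
            (by linarith : (0:ℝ) ≤ 1 - Real.exp (c * (rh t - r t)))]
        have hrw : (gam * ih t - gam * i t) + gam * (1 - c) * (rh t - r t)
            = gam * (s t - sh t - c * (rh t - r t)) := by
          rw [hih, hi]; ring
        rw [hrw]
        exact mul_nonneg hgam.le hkey)
    intro t ht
    have h := this t ht
    linarith
  -- conclusion
  intro t ht
  have hBt := stepB t ht
  have hA := stepA t ht
  have hC := stepC t ht
  have hexp : Real.exp (-(c * (rh t - r0))) ≤ Real.exp (-(c * (r t - r0))) := by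
    apply Real.exp_le_exp.2
    nlinarith
  calc sh t = s0 * Real.exp (-(c * (rh t - r0))) := hBt
    _ ≤ s0 * Real.exp (-(c * (r t - r0))) := by nlinarith
    _ ≤ s t := hA
end

section
/- Let W^N be a multivariate hypergeometric sample of size Θ (without replacement) from a population of size N partitioned into three groups of sizes (S,I,R), and W the corresponding multinomial sample (with replacement, probabilities (S/N,I/N,R/N)), where Θ is a random size independent of the draws. Then the total variation distance between law(W^N) and law(W) is at most 2(1 - E[∏_{j=0}^{Θ-1}(N-j)/N]) + 2P(Θ>N). -/
open MeasureTheory Set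

noncomputable def ff (N θ : ℕ) : ℝ := ∏ j ∈ Finset.range θ, (((N : ℝ) - j) / N)

lemma ff_eq_zero {N θ : ℕ} (h : N < θ) : ff N θ = 0 := by
  apply Finset.prod_eq_zero (Finset.mem_range.2 h)
  simp

lemma ff_factor_mem {N θ j : ℕ} (hN : 0 < N) (h : θ ≤ N) (hj : j ∈ Finset.range θ) :
    0 ≤ ((N : ℝ) - j) / N ∧ ((N : ℝ) - j) / N ≤ 1 := by
  have hj' : j < θ := Finset.mem_range.1 hj
  have h1 : (j : ℝ) ≤ N := by exact_mod_cast (hj'.le.trans h)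
  have hNp : (0:ℝ) < N := by exact_mod_cast hN
  have h0 : (0:ℝ) ≤ j := by positivity
  constructor
  · apply div_nonneg (by linarith) hNp.le
  · rw [div_le_one hNp]; linarith

lemma ff_nonneg {N θ : ℕ} (hN : 0 < N) : 0 ≤ ff N θ := by
  by_cases h : θ ≤ N
  · exact Finset.prod_nonneg fun j hj => (ff_factor_mem hN h hj).1
  · rw [ff_eq_zero (not_le.1 h)]

lemma ff_le_one {N θ : ℕ} (hN : 0 < N) : ff N θ ≤ 1 := by
  by_cases h : θ ≤ N
  · exact Finset.prod_le_one (fun j hj => (ff_factor_mem hN h hj).1)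
      (fun j hj => (ff_factor_mem hN h hj).2)
  · rw [ff_eq_zero (not_le.1 h)]; norm_num

lemma ff_eq {N θ : ℕ} (h : θ ≤ N) :
    ff N θ = (N.descFactorial θ : ℝ) / (N : ℝ) ^ θ := by
  rw [ff, Finset.prod_div_distrib, Finset.prod_const, Finset.card_range,
    Nat.descFactorial_eq_prod_range]
  congr 1
  push_cast
  apply Finset.prod_congr rfl
  intro j hj
  have hj' : j < θ := Finset.mem_range.1 hj
  rw [Nat.cast_sub (hj'.le.trans h)]

lemma key_ineq {N S I R θ a b c : ℕ} (hN : 0 < N)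
    (hθ : θ ≤ N) (habc : a + b + c = θ) :
    ff N θ * (((S.choose a : ℝ) * (I.choose b : ℝ) * (R.choose c : ℝ)) / (N.choose θ : ℝ)) ≤
      ((θ.factorial : ℝ) / ((a.factorial : ℝ) * (b.factorial : ℝ) * (c.factorial : ℝ))) *
        ((S : ℝ) / N) ^ a * ((I : ℝ) / N) ^ b * ((R : ℝ) / N) ^ c := by
  have hnat : (S.choose a * I.choose b * R.choose c) * (a.factorial * b.factorial * c.factorial)
      ≤ S ^ a * I ^ b * R ^ c := by
    calc (S.choose a * I.choose b * R.choose c) * (a.factorial * b.factorial * c.factorial)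
        = (a.factorial * S.choose a) * ((b.factorial * I.choose b) * (c.factorial * R.choose c)) := by
          ring
      _ = S.descFactorial a * (I.descFactorial b * R.descFactorial c) := by
          rw [← Nat.descFactorial_eq_factorial_mul_choose,
            ← Nat.descFactorial_eq_factorial_mul_choose,
            ← Nat.descFactorial_eq_factorial_mul_choose]
      _ ≤ S ^ a * (I ^ b * R ^ c) :=
          Nat.mul_le_mul (Nat.descFactorial_le_pow _ _)
            (Nat.mul_le_mul (Nat.descFactorial_le_pow _ _) (Nat.descFactorial_le_pow _ _))
      _ = S ^ a * I ^ b * R ^ c := by ring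
  have hKey : ((S.choose a : ℝ) * I.choose b * R.choose c) *
      ((a.factorial : ℝ) * b.factorial * c.factorial) ≤ (S:ℝ) ^ a * I ^ b * R ^ c := by
    exact_mod_cast hnat
  have hNp : (0:ℝ) < N := by exact_mod_cast hN
  have hchoosepos : (0:ℝ) < (N.choose θ : ℝ) := by exact_mod_cast Nat.choose_pos hθ
  have hdesc : (N.descFactorial θ : ℝ) = (θ.factorial : ℝ) * (N.choose θ : ℝ) := by
    exact_mod_cast congrArg (Nat.cast (R := ℝ)) (Nat.descFactorial_eq_factorial_mul_choose N θ)
  have hpow : (N:ℝ) ^ θ = (N:ℝ)^a * (N:ℝ)^b * (N:ℝ)^c := by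
    rw [← pow_add, ← pow_add, habc]
  rw [ff_eq hθ, hdesc, div_pow, div_pow, div_pow, div_mul_div_comm]
  have lhs_eq : (θ.factorial : ℝ) * (N.choose θ : ℝ) *
      ((S.choose a : ℝ) * (I.choose b : ℝ) * (R.choose c : ℝ)) / ((N:ℝ)^θ * (N.choose θ : ℝ))
      = (θ.factorial : ℝ) * ((S.choose a : ℝ) * (I.choose b : ℝ) * (R.choose c : ℝ)) / (N:ℝ)^θ := by
    field_simp
  rw [lhs_eq]
  have rhs_eq : ((θ.factorial : ℝ) / ((a.factorial : ℝ) * (b.factorial : ℝ) * (c.factorial : ℝ))) *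
        ((S:ℝ)^a / (N:ℝ)^a) * ((I:ℝ)^b / (N:ℝ)^b) * ((R:ℝ)^c / (N:ℝ)^c)
      = (θ.factorial : ℝ) * ((S:ℝ)^a * (I:ℝ)^b * (R:ℝ)^c) /
          (((a.factorial : ℝ) * (b.factorial : ℝ) * (c.factorial : ℝ)) * (N:ℝ)^θ) := by
    rw [hpow]
    field_simp
  rw [rhs_eq, div_le_div_iff₀ (by positivity) (by positivity)]
  have h1 : (0:ℝ) ≤ (θ.factorial : ℝ) * (N:ℝ)^θ := by positivity
  calc (θ.factorial : ℝ) * ((S.choose a : ℝ) * (I.choose b : ℝ) * (R.choose c : ℝ)) *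
        ((a.factorial : ℝ) * (b.factorial : ℝ) * (c.factorial : ℝ) * (N:ℝ)^θ)
      = (((S.choose a : ℝ) * I.choose b * R.choose c) *
          ((a.factorial : ℝ) * b.factorial * c.factorial)) * ((θ.factorial : ℝ) * (N:ℝ)^θ) := by
        ring
    _ ≤ ((S:ℝ)^a * I^b * R^c) * ((θ.factorial : ℝ) * (N:ℝ)^θ) :=
        mul_le_mul_of_nonneg_right hKey h1
    _ = (θ.factorial : ℝ) * ((S:ℝ)^a * (I:ℝ)^b * (R:ℝ)^c) * (N:ℝ)^θ := by ring

section
variable {Ω : Type*} [MeasurableSpace Ω] (Pr : Measure Ω) [IsProbabilityMeasure Pr]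
  (Θ : Ω → ℕ) (hΘ : Measurable Θ) (V : Ω → ℕ × ℕ × ℕ) (hV : Measurable V)

include hΘ in
lemma meas_theta (θ : ℕ) : MeasurableSet {ω | Θ ω = θ} :=
  hΘ (measurableSet_singleton θ)

include hΘ hV in
lemma meas_joint (θ : ℕ) (x : ℕ × ℕ × ℕ) : MeasurableSet {ω | Θ ω = θ ∧ V ω = x} := by
  have : {ω | Θ ω = θ ∧ V ω = x} = {ω | Θ ω = θ} ∩ V ⁻¹' {x} := rfl
  rw [this]
  exact (meas_theta Θ hΘ θ).inter (hV (measurableSet_singleton x))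

include hΘ in
lemma decomp_theta (B : Set Ω) (hB : MeasurableSet B) :
    (Pr B).toReal = ∑' θ : ℕ, (Pr ({ω | Θ ω = θ} ∩ B)).toReal := by
  have hU : B = ⋃ θ : ℕ, ({ω | Θ ω = θ} ∩ B) := by
    ext ω; simp
  have hd : Pairwise (Function.onFun Disjoint fun θ : ℕ => {ω | Θ ω = θ} ∩ B) := by
    intro i j hij
    simp only [Function.onFun, Set.disjoint_left]
    rintro ω ⟨h1, -⟩ ⟨h2, -⟩
    exact hij (h1.symm.trans h2)
  rw [← ENNReal.tsum_toReal_eq (fun θ => measure_ne_top Pr _)]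
  congr 1
  rw [← measure_iUnion hd (fun θ => (meas_theta Θ hΘ θ).inter hB), ← hU]

include hΘ in
lemma summable_slices (B : Set Ω) (hB : MeasurableSet B) :
    Summable (fun θ : ℕ => (Pr ({ω | Θ ω = θ} ∩ B)).toReal) := by
  apply ENNReal.summable_toReal
  have hd : Pairwise (Function.onFun Disjoint fun θ : ℕ => {ω | Θ ω = θ} ∩ B) := by
    intro i j hij
    simp only [Function.onFun, Set.disjoint_left]
    rintro ω ⟨h1, -⟩ ⟨h2, -⟩
    exact hij (h1.symm.trans h2)
  rw [← measure_iUnion hd (fun θ => (meas_theta Θ hΘ θ).inter hB)]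
  exact measure_ne_top Pr _

include hΘ in
lemma summable_p : Summable (fun θ : ℕ => (Pr {ω | Θ ω = θ}).toReal) := by
  have := summable_slices Pr Θ hΘ Set.univ MeasurableSet.univ
  simpa using this

include hΘ in
lemma tsum_p : ∑' θ : ℕ, (Pr {ω | Θ ω = θ}).toReal = 1 := by
  have := decomp_theta Pr Θ hΘ Set.univ MeasurableSet.univ
  simp only [Set.inter_univ] at this
  rw [← this]
  simp

include hΘ hV in
lemma slice_tsum (B : Set (ℕ × ℕ × ℕ)) (θ : ℕ) :
    (Pr ({ω | Θ ω = θ} ∩ V ⁻¹' B)).toReal =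
      ∑' x : B, (Pr {ω | Θ ω = θ ∧ V ω = (x : ℕ × ℕ × ℕ)}).toReal := by
  have hU : {ω | Θ ω = θ} ∩ V ⁻¹' B = ⋃ x : B, {ω | Θ ω = θ ∧ V ω = (x : ℕ × ℕ × ℕ)} := by
    ext ω
    simp only [Set.mem_inter_iff, Set.mem_preimage, Set.mem_iUnion, Set.mem_setOf_eq]
    constructor
    · rintro ⟨h1, h2⟩; exact ⟨⟨V ω, h2⟩, h1, rfl⟩
    · rintro ⟨⟨x, hx⟩, h1, h2⟩; exact ⟨h1, h2 ▸ hx⟩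
  have hd : Pairwise (Function.onFun Disjoint
      fun x : B => {ω | Θ ω = θ ∧ V ω = (x : ℕ × ℕ × ℕ)}) := by
    intro i j hij
    simp only [Function.onFun, Set.disjoint_left]
    rintro ω ⟨-, h1⟩ ⟨-, h2⟩
    exact hij (Subtype.ext (h1.symm.trans h2))
  rw [hU, measure_iUnion hd (fun x => meas_joint Θ hΘ V hV θ _),
    ENNReal.tsum_toReal_eq (fun x => measure_ne_top Pr _)]

include hΘ hV in
lemma slice_summable (B : Set (ℕ × ℕ × ℕ)) (θ : ℕ) :
    Summable (fun x : B => (Pr {ω | Θ ω = θ ∧ V ω = (x : ℕ × ℕ × ℕ)}).toReal) := by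
  apply ENNReal.summable_toReal
  rw [← measure_iUnion ?hd (fun x => meas_joint Θ hΘ V hV θ _)]
  · exact measure_ne_top Pr _
  · intro i j hij
    simp only [Function.onFun, Set.disjoint_left]
    rintro ω ⟨-, h1⟩ ⟨-, h2⟩
    exact hij (Subtype.ext (h1.symm.trans h2))

include hΘ hV in
lemma slice_compl (B : Set (ℕ × ℕ × ℕ)) (θ : ℕ) :
    (Pr ({ω | Θ ω = θ} ∩ V ⁻¹' B)).toReal + (Pr ({ω | Θ ω = θ} ∩ V ⁻¹' Bᶜ)).toReal =
      (Pr {ω | Θ ω = θ}).toReal := by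
  have hm : MeasurableSet ({ω | Θ ω = θ} ∩ V ⁻¹' Bᶜ) :=
    (meas_theta Θ hΘ θ).inter (hV (B.to_countable.measurableSet.compl))
  have hd : Disjoint ({ω | Θ ω = θ} ∩ V ⁻¹' B) ({ω | Θ ω = θ} ∩ V ⁻¹' Bᶜ) := by
    simp only [Set.disjoint_left]
    rintro ω ⟨-, h1⟩ ⟨-, h2⟩
    exact h2 h1
  have hU : ({ω | Θ ω = θ} ∩ V ⁻¹' B) ∪ ({ω | Θ ω = θ} ∩ V ⁻¹' Bᶜ) = {ω | Θ ω = θ} := by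
    ext ω
    by_cases h : V ω ∈ B <;> simp [h, Set.mem_setOf_eq]
  rw [← ENNReal.toReal_add (measure_ne_top Pr _) (measure_ne_top Pr _),
    ← measure_union hd hm, hU]

include hΘ in
lemma integral_ff (N : ℕ) :
    ∫ ω, ff N (Θ ω) ∂Pr =
      ∑ θ ∈ Finset.range (N + 1), (Pr {ω | Θ ω = θ}).toReal * ff N θ := by
  have hfun : ∀ ω, ff N (Θ ω) =
      ∑ θ ∈ Finset.range (N + 1), Set.indicator {ω' | Θ ω' = θ} (fun _ => ff N θ) ω := by
    intro ω
    have : ∀ θ : ℕ, Set.indicator {ω' | Θ ω' = θ} (fun _ => ff N θ) ω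
        = if Θ ω = θ then ff N θ else 0 := by
      intro θ
      rw [Set.indicator_apply]
      simp [Set.mem_setOf_eq]
    simp only [this]
    rw [Finset.sum_ite_eq (Finset.range (N + 1)) (Θ ω) (fun θ => ff N θ)]
    by_cases h : Θ ω ∈ Finset.range (N + 1)
    · rw [if_pos h]
    · rw [if_neg h]
      exact (ff_eq_zero (by simpa [Nat.lt_succ_iff, not_le] using h))
  calc ∫ ω, ff N (Θ ω) ∂Pr
      = ∫ ω, ∑ θ ∈ Finset.range (N + 1),
          Set.indicator {ω' | Θ ω' = θ} (fun _ => ff N θ) ω ∂Pr := by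
        congr 1; funext ω; exact hfun ω
    _ = ∑ θ ∈ Finset.range (N + 1),
          ∫ ω, Set.indicator {ω' | Θ ω' = θ} (fun _ => ff N θ) ω ∂Pr := by
        apply integral_finset_sum
        intro θ _
        exact (integrable_const (ff N θ)).indicator (meas_theta Θ hΘ θ)
    _ = ∑ θ ∈ Finset.range (N + 1), (Pr {ω | Θ ω = θ}).toReal * ff N θ := by
        apply Finset.sum_congr rfl
        intro θ _
        rw [integral_indicator_const (ff N θ) (meas_theta Θ hΘ θ), smul_eq_mul]
        rfl

end

theorem stmt18 {Ω : Type*} [MeasurableSpace Ω] (Pr : Measure Ω) [IsProbabilityMeasure Pr]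
    (N S I R : ℕ) (hN : 0 < N) (hSIR : S + I + R = N)
    (Θ : Ω → ℕ) (hΘ : Measurable Θ)
    (WN W : Ω → ℕ × ℕ × ℕ) (hWN : Measurable WN) (hW : Measurable W)
    -- joint law of (Θ, WN): given Θ = θ ≤ N, WN is multivariate hypergeometric
    -- (sampling θ individuals without replacement); WN = (0,0,0) when Θ > N:
    (hlawN : ∀ (θ a b c : ℕ),
      (Pr {ω | Θ ω = θ ∧ WN ω = (a, b, c)}).toReal =
        (Pr {ω | Θ ω = θ}).toReal *
          (if θ ≤ N then
            (if a + b + c = θ then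
              ((S.choose a : ℝ) * (I.choose b : ℝ) * (R.choose c : ℝ)) / (N.choose θ : ℝ)
            else 0)
          else (if (a, b, c) = (0, 0, 0) then 1 else 0)))
    -- joint law of (Θ, W): given Θ = θ, W is multinomial with θ trials and
    -- probabilities (S/N, I/N, R/N) (sampling with replacement):
    (hlaw : ∀ (θ a b c : ℕ),
      (Pr {ω | Θ ω = θ ∧ W ω = (a, b, c)}).toReal =
        (Pr {ω | Θ ω = θ}).toReal *
          (if a + b + c = θ then
            ((θ.factorial : ℝ) /
                ((a.factorial : ℝ) * (b.factorial : ℝ) * (c.factorial : ℝ))) *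
              ((S : ℝ) / N) ^ a * ((I : ℝ) / N) ^ b * ((R : ℝ) / N) ^ c
          else 0)) :
    ∀ A : Set (ℕ × ℕ × ℕ),
      |(Pr (WN ⁻¹' A)).toReal - (Pr (W ⁻¹' A)).toReal| ≤
        (1 - ∫ ω, ∏ j ∈ Finset.range (Θ ω), (((N : ℝ) - j) / N) ∂Pr)
          + (Pr {ω | N < Θ ω}).toReal := by
  intro A
  have hp_nonneg : ∀ θ : ℕ, (0:ℝ) ≤ (Pr {ω | Θ ω = θ}).toReal :=
    fun θ => ENNReal.toReal_nonneg
  -- pointwise pmf inequality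
  have hpt : ∀ (θ : ℕ) (x : ℕ × ℕ × ℕ),
      ff N θ * (Pr {ω | Θ ω = θ ∧ WN ω = x}).toReal ≤
        (Pr {ω | Θ ω = θ ∧ W ω = x}).toReal := by
    rintro θ ⟨a, b, c⟩
    rw [hlawN θ a b c, hlaw θ a b c]
    by_cases hθ : θ ≤ N
    · rw [if_pos hθ]
      by_cases habc : a + b + c = θ
      · rw [if_pos habc, if_pos habc]
        calc ff N θ * ((Pr {ω | Θ ω = θ}).toReal * (((S.choose a : ℝ) * (I.choose b : ℝ) * (R.choose c : ℝ)) /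
              (N.choose θ : ℝ)))
            = (Pr {ω | Θ ω = θ}).toReal * (ff N θ * (((S.choose a : ℝ) * (I.choose b : ℝ) * (R.choose c : ℝ)) /
              (N.choose θ : ℝ))) := by ring
          _ ≤ (Pr {ω | Θ ω = θ}).toReal * (((θ.factorial : ℝ) /
                ((a.factorial : ℝ) * (b.factorial : ℝ) * (c.factorial : ℝ))) *
              ((S : ℝ) / N) ^ a * ((I : ℝ) / N) ^ b * ((R : ℝ) / N) ^ c) :=
            mul_le_mul_of_nonneg_left (key_ineq hN hθ habc) (hp_nonneg θ)
      · simp [habc]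

    · push_neg at hθ
      rw [ff_eq_zero hθ, zero_mul]
      apply mul_nonneg (hp_nonneg θ)
      split_ifs with h
      · positivity
      · exact le_refl 0
  -- measurability of arbitrary sets of triples
  have hAmeas : ∀ B : Set (ℕ × ℕ × ℕ), MeasurableSet B := fun B => B.to_countable.measurableSet
  -- slice inequality: ff N θ * q B θ ≤ r B θ
  have hfq : ∀ (B : Set (ℕ × ℕ × ℕ)) (θ : ℕ),
      ff N θ * (Pr ({ω | Θ ω = θ} ∩ WN ⁻¹' B)).toReal ≤
        (Pr ({ω | Θ ω = θ} ∩ W ⁻¹' B)).toReal := by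
    intro B θ
    rw [slice_tsum Pr Θ hΘ WN hWN B θ, slice_tsum Pr Θ hΘ W hW B θ, ← tsum_mul_left]
    exact Summable.tsum_le_tsum (fun x => hpt θ x)
      ((slice_summable Pr Θ hΘ WN hWN B θ).mul_left _)
      (slice_summable Pr Θ hΘ W hW B θ)
  -- per-θ total variation bound
  have habs : ∀ θ : ℕ,
      |(Pr ({ω | Θ ω = θ} ∩ WN ⁻¹' A)).toReal - (Pr ({ω | Θ ω = θ} ∩ W ⁻¹' A)).toReal| ≤
        (Pr {ω | Θ ω = θ}).toReal * (1 - ff N θ) := by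
    intro θ
    have h1 := hfq A θ
    have h2 := hfq Aᶜ θ
    have h3 := slice_compl Pr Θ hΘ WN hWN A θ
    have h4 := slice_compl Pr Θ hΘ W hW A θ
    have hf0 : 0 ≤ ff N θ := ff_nonneg hN
    have hf1 : ff N θ ≤ 1 := ff_le_one hN
    have n1 : (0:ℝ) ≤ (Pr ({ω | Θ ω = θ} ∩ WN ⁻¹' A)).toReal := ENNReal.toReal_nonneg
    have n2 : (0:ℝ) ≤ (Pr ({ω | Θ ω = θ} ∩ WN ⁻¹' Aᶜ)).toReal := ENNReal.toReal_nonneg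
    have n3 : (0:ℝ) ≤ (Pr ({ω | Θ ω = θ} ∩ W ⁻¹' A)).toReal := ENNReal.toReal_nonneg
    have n4 : (0:ℝ) ≤ (Pr ({ω | Θ ω = θ} ∩ W ⁻¹' Aᶜ)).toReal := ENNReal.toReal_nonneg
    rw [abs_le]
    constructor
    · nlinarith
    · nlinarith
  -- summability facts
  have hsq : Summable (fun θ : ℕ => (Pr ({ω | Θ ω = θ} ∩ WN ⁻¹' A)).toReal) :=
    summable_slices Pr Θ hΘ (WN ⁻¹' A) (hWN (hAmeas A))
  have hsr : Summable (fun θ : ℕ => (Pr ({ω | Θ ω = θ} ∩ W ⁻¹' A)).toReal) :=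
    summable_slices Pr Θ hΘ (W ⁻¹' A) (hW (hAmeas A))
  have hsp : Summable (fun θ : ℕ => (Pr {ω | Θ ω = θ}).toReal) := summable_p Pr Θ hΘ
  have hspf : Summable (fun θ => (Pr {ω | Θ ω = θ}).toReal * ff N θ) := by
    apply summable_of_ne_finset_zero (s := Finset.range (N + 1))
    intro θ hθ
    rw [ff_eq_zero (by simpa [Nat.lt_succ_iff, not_le] using hθ), mul_zero]
  have hspf' : Summable (fun θ => (Pr {ω | Θ ω = θ}).toReal * (1 - ff N θ)) := by
    have he : (fun θ => (Pr {ω | Θ ω = θ}).toReal * (1 - ff N θ)) = fun θ => (Pr {ω | Θ ω = θ}).toReal - (Pr {ω | Θ ω = θ}).toReal * ff N θ := by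
      funext θ; ring
    rw [he]
    exact hsp.sub hspf
  have hdiff : Summable (fun θ : ℕ =>
      |(Pr ({ω | Θ ω = θ} ∩ WN ⁻¹' A)).toReal - (Pr ({ω | Θ ω = θ} ∩ W ⁻¹' A)).toReal|) := by
    apply Summable.of_nonneg_of_le (fun θ => abs_nonneg _) ?_ hsp
    intro θ
    refine (habs θ).trans ?_
    have hf0 : 0 ≤ ff N θ := ff_nonneg hN
    nlinarith [hp_nonneg θ]
  -- decompositions
  have hdecompN : (Pr (WN ⁻¹' A)).toReal =
      ∑' θ : ℕ, (Pr ({ω | Θ ω = θ} ∩ WN ⁻¹' A)).toReal :=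
    decomp_theta Pr Θ hΘ _ (hWN (hAmeas A))
  have hdecompW : (Pr (W ⁻¹' A)).toReal =
      ∑' θ : ℕ, (Pr ({ω | Θ ω = θ} ∩ W ⁻¹' A)).toReal :=
    decomp_theta Pr Θ hΘ _ (hW (hAmeas A))
  -- integral identity
  have hint : ∫ ω, ∏ j ∈ Finset.range (Θ ω), (((N : ℝ) - j) / N) ∂Pr =
      ∑' θ : ℕ, (Pr {ω | Θ ω = θ}).toReal * ff N θ := by
    have h1 : ∫ ω, ∏ j ∈ Finset.range (Θ ω), (((N : ℝ) - j) / N) ∂Pr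
        = ∫ ω, ff N (Θ ω) ∂Pr := rfl
    rw [h1, integral_ff Pr Θ hΘ N]
    refine (tsum_eq_sum ?_).symm
    intro θ hθ
    rw [ff_eq_zero (by simpa [Nat.lt_succ_iff, not_le] using hθ), mul_zero]
  -- main chain
  have hchain : |(Pr (WN ⁻¹' A)).toReal - (Pr (W ⁻¹' A)).toReal| ≤
      1 - ∑' θ : ℕ, (Pr {ω | Θ ω = θ}).toReal * ff N θ := by
    rw [hdecompN, hdecompW, ← Summable.tsum_sub hsq hsr]
    calc |∑' θ : ℕ, ((Pr ({ω | Θ ω = θ} ∩ WN ⁻¹' A)).toReal -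
            (Pr ({ω | Θ ω = θ} ∩ W ⁻¹' A)).toReal)|
        ≤ ∑' θ : ℕ, |(Pr ({ω | Θ ω = θ} ∩ WN ⁻¹' A)).toReal -
            (Pr ({ω | Θ ω = θ} ∩ W ⁻¹' A)).toReal| := by
          have := norm_tsum_le_tsum_norm (f := fun θ : ℕ =>
            (Pr ({ω | Θ ω = θ} ∩ WN ⁻¹' A)).toReal -
              (Pr ({ω | Θ ω = θ} ∩ W ⁻¹' A)).toReal)
            (by simpa [Real.norm_eq_abs] using hdiff)
          simpa [Real.norm_eq_abs] using this
      _ ≤ ∑' θ : ℕ, (Pr {ω | Θ ω = θ}).toReal * (1 - ff N θ) := Summable.tsum_le_tsum habs hdiff hspf'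
      _ = ∑' θ : ℕ, ((Pr {ω | Θ ω = θ}).toReal - (Pr {ω | Θ ω = θ}).toReal * ff N θ) := by
          congr 1; funext θ; ring
      _ = (∑' θ : ℕ, (Pr {ω | Θ ω = θ}).toReal) - ∑' θ : ℕ, (Pr {ω | Θ ω = θ}).toReal * ff N θ := Summable.tsum_sub hsp hspf
      _ = 1 - ∑' θ : ℕ, (Pr {ω | Θ ω = θ}).toReal * ff N θ := by exact congrArg₂ Sub.sub (tsum_p Pr Θ hΘ) rfl
  calc |(Pr (WN ⁻¹' A)).toReal - (Pr (W ⁻¹' A)).toReal|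
      ≤ 1 - ∑' θ : ℕ, (Pr {ω | Θ ω = θ}).toReal * ff N θ := hchain
    _ = 1 - ∫ ω, ∏ j ∈ Finset.range (Θ ω), (((N : ℝ) - j) / N) ∂Pr := by rw [hint]
    _ ≤ (1 - ∫ ω, ∏ j ∈ Finset.range (Θ ω), (((N : ℝ) - j) / N) ∂Pr)
          + (Pr {ω | N < Θ ω}).toReal := le_add_of_nonneg_right ENNReal.toReal_nonneg
end
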